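/- arXiv:1304.2649 — 9 statements merged into one kernel-verified Lean document; each statement's English description precedes it below -/
import Mathlib

section
/- Let R be a φ-simple φ-ring, let Q be the localization of R at its multiplicative set of non-zero-divisors (the total quotient ring), and let Φ : Q → Q be a ring endomorphism satisfying Φ ∘ algebraMap R Q = algebraMap R Q ∘ φ. Then every Φ-constant of Q comes from a φ-constant of R: for every x ∈ Q with Φ(x) = x there exists r ∈ R with φ(r) = r and algebraMap R Q r = x; that is, Q^Φ equals the image of R^φ under the localization map. -/
/-- A `φ`-ring `R` is `φ`-simple if the zero ideal and the whole ring are its only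
`φ`-ideals (ideals `I` with `φ(I) ⊆ I`). -/
def DiffSimple {R : Type*} [CommRing R] (φ : R →+* R) : Prop :=
  (⊥ : Ideal R) ≠ ⊤ ∧ ∀ I : Ideal R, (∀ x ∈ I, φ x ∈ I) → I = ⊥ ∨ I = ⊤

/-- If `R` is a `φ`-simple `φ`-ring, `Q` its total quotient ring (localization at the
non-zero-divisors) and `Φ : Q → Q` extends `φ`, then the `Φ`-constants of `Q` are exactly
the image of the `φ`-constants of `R`. -/
theorem constants_of_total_quotient_ring_of_diffSimple
    {R Q : Type*} [CommRing R] [CommRing Q] [Algebra R Q]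
    [IsLocalization (nonZeroDivisors R) Q]
    (φ : R →+* R) (hsimple : DiffSimple φ)
    (Φ : Q →+* Q) (hcomp : Φ.comp (algebraMap R Q) = (algebraMap R Q).comp φ) :
    {x : Q | Φ x = x} = (algebraMap R Q) '' {r : R | φ r = r} := by
  have hc : ∀ r : R, Φ (algebraMap R Q r) = algebraMap R Q (φ r) := fun r =>
    RingHom.congr_fun hcomp r
  haveI : Nontrivial R := by
    rcases subsingleton_or_nontrivial R with h | h
    · exact absurd (Subsingleton.elim (⊥ : Ideal R) ⊤) hsimple.1
    · exact h
  have hinj : Function.Injective (algebraMap R Q) :=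
    IsLocalization.injective Q (le_refl (nonZeroDivisors R))
  ext x
  constructor
  · intro hx
    -- the ideal of "denominators" of x
    set I : Ideal R :=
      { carrier := {r : R | ∃ s : R, algebraMap R Q r * x = algebraMap R Q s}
        add_mem' := by
          rintro a b ⟨s, hs⟩ ⟨t, ht⟩
          exact ⟨s + t, by rw [map_add, map_add, add_mul, hs, ht]⟩
        zero_mem' := ⟨0, by simp⟩
        smul_mem' := by
          rintro c a ⟨s, hs⟩
          exact ⟨c * s, by rw [smul_eq_mul, map_mul, map_mul, mul_assoc, hs]⟩ } with hI
    have hstable : ∀ r ∈ I, φ r ∈ I := by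
      rintro r ⟨s, hs⟩
      refine ⟨φ s, ?_⟩
      have := congrArg Φ hs
      rwa [map_mul, hc, hc, hx] at this
    have hne : I ≠ ⊥ := by
      obtain ⟨⟨n, d⟩, hd⟩ := IsLocalization.surj (nonZeroDivisors R) x
      intro hbot
      have hdI : (d : R) ∈ I := ⟨n, by rw [mul_comm]; exact hd⟩
      rw [hbot] at hdI
      have : (d : R) = 0 := hdI
      exact (nonZeroDivisors.coe_ne_zero d) this
    have htop : I = ⊤ := (hsimple.2 I hstable).resolve_left hne
    have h1 : (1 : R) ∈ I := htop ▸ Submodule.mem_top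
    obtain ⟨s, hs⟩ := h1
    rw [map_one, one_mul] at hs
    refine ⟨s, ?_, hs.symm⟩
    have : algebraMap R Q (φ s) = algebraMap R Q s := by
      rw [← hc, ← hs, hx, hs]
    exact hinj this
  · rintro ⟨r, hr, rfl⟩
    show Φ _ = _
    rw [hc, hr]
end

section
/- Let R be a φ-simple φ-ring, let k be a field, and suppose R is a k-algebra such that φ(algebraMap k R c) = algebraMap k R c for all c ∈ k and the range of algebraMap k R is exactly the subring R^φ of φ-constants. Let D be a commutative k-algebra and equip T := R ⊗_k D with the ring endomorphism Φ := φ ⊗ id. Then the assignments b ↦ Ideal.map (includeRight : D → R ⊗_k D) b and a ↦ Ideal.comap includeRight a are mutually inverse bijections between the set of ideals of D and the set of Φ-stable ideals of T; in particular, for every ideal b of D, Ideal.map includeRight b is Φ-stable and Ideal.comap includeRight (Ideal.map includeRight b) = b, and for every ideal a of T with Φ(a) ⊆ a, Ideal.map includeRight (Ideal.comap includeRight a) = a. -/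
open scoped TensorProduct

section Aux

variable {k R D : Type*} [Field k] [CommRing R] [Algebra k R] [CommRing D] [Algebra k D]

/-- Key claim: if the `d i` are linearly independent modulo `b = comap includeRight a`,
then any `∑ rᵢ ⊗ dᵢ` lying in the `Φ`-stable ideal `a` has all `rᵢ = 0`. -/
private theorem claim_aux (φ : R →+* R) (hsimple : DiffSimple φ)
    (hrange : ∀ r : R, φ r = r ↔ ∃ c : k, algebraMap k R c = r)
    (Φ : (R ⊗[k] D) →+* (R ⊗[k] D))
    (hΦ : ∀ (r : R) (d : D), Φ (r ⊗ₜ[k] d) = φ r ⊗ₜ[k] d)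
    (a : Ideal (R ⊗[k] D)) (ha : ∀ x ∈ a, Φ x ∈ a) :
    ∀ n (d : Fin n → D) (r : Fin n → R),
      (LinearIndependent k fun i =>
        Ideal.Quotient.mkₐ k
          (a.comap (Algebra.TensorProduct.includeRight : D →ₐ[k] R ⊗[k] D)) (d i)) →
      (∑ i, r i ⊗ₜ[k] d i) ∈ a → ∀ i, r i = 0 := by
  have hRnt : Nontrivial R := by
    rcases subsingleton_or_nontrivial R with h | h
    · exact absurd (Subsingleton.elim (⊥ : Ideal R) ⊤) hsimple.1
    · exact h
  intro n
  induction n with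
  | zero => exact fun d r _ _ i => i.elim0
  | succ m ih =>
    intro d r hli hmem j
    by_contra hrj
    set b : Ideal D :=
      a.comap (Algebra.TensorProduct.includeRight : D →ₐ[k] R ⊗[k] D) with hb
    -- the ideal of `j`-coefficients
    let J : Ideal R :=
      { carrier := {s : R | ∃ t : Fin (m + 1) → R,
          t j = s ∧ (∑ i, t i ⊗ₜ[k] d i) ∈ a},
        add_mem' := by
          rintro x y ⟨t, ht, hta⟩ ⟨u, hu, hua⟩
          refine ⟨t + u, by simp [ht, hu], ?_⟩
          have : (∑ i, (t + u) i ⊗ₜ[k] d i)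
              = (∑ i, t i ⊗ₜ[k] d i) + ∑ i, u i ⊗ₜ[k] d i := by
            rw [← Finset.sum_add_distrib]
            exact Finset.sum_congr rfl fun i _ => TensorProduct.add_tmul _ _ _
          rw [this]
          exact a.add_mem hta hua
        zero_mem' := ⟨0, rfl, by simp⟩
        smul_mem' := by
          rintro c x ⟨t, ht, hta⟩
          refine ⟨fun i => c * t i, by dsimp only; rw [ht, smul_eq_mul], ?_⟩
          have : (∑ i, (c * t i) ⊗ₜ[k] d i)
              = (c ⊗ₜ[k] (1 : D)) * ∑ i, t i ⊗ₜ[k] d i := by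
            rw [Finset.mul_sum]
            exact Finset.sum_congr rfl fun i _ => by
              rw [Algebra.TensorProduct.tmul_mul_tmul, one_mul]
          rw [this]
          exact Ideal.mul_mem_left _ _ hta }
    have hJstable : ∀ x ∈ J, φ x ∈ J := by
      rintro x ⟨t, ht, hta⟩
      refine ⟨fun i => φ (t i), by dsimp only; rw [ht], ?_⟩
      have h1 := ha _ hta
      have h2 : Φ (∑ i, t i ⊗ₜ[k] d i) = ∑ i, φ (t i) ⊗ₜ[k] d i := by
        rw [map_sum]
        exact Finset.sum_congr rfl fun i _ => hΦ _ _
      rwa [h2] at h1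
    have hrJ : r j ∈ J := ⟨r, rfl, hmem⟩
    have hJtop : J = ⊤ := by
      rcases hsimple.2 J hJstable with h | h
      · rw [h] at hrJ
        exact absurd (Ideal.mem_bot.mp hrJ) hrj
      · exact h
    obtain ⟨s, hsj, hsa⟩ : (1 : R) ∈ J := hJtop ▸ Submodule.mem_top
    -- `Φ y - y` lies in `a` and is supported away from `j`
    have hsub : (∑ i, (φ (s i) - s i) ⊗ₜ[k] d i) ∈ a := by
      have h1 := ha _ hsa
      have h2 : Φ (∑ i, s i ⊗ₜ[k] d i) = ∑ i, φ (s i) ⊗ₜ[k] d i := by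
        rw [map_sum]
        exact Finset.sum_congr rfl fun i _ => hΦ _ _
      rw [h2] at h1
      have h3 : (∑ i, (φ (s i) - s i) ⊗ₜ[k] d i)
          = (∑ i, φ (s i) ⊗ₜ[k] d i) - ∑ i, s i ⊗ₜ[k] d i := by
        rw [← Finset.sum_sub_distrib]
        exact Finset.sum_congr rfl fun i _ => TensorProduct.sub_tmul _ _ _
      rw [h3]
      exact a.sub_mem h1 hsa
    have hsplit : (∑ i, (φ (s i) - s i) ⊗ₜ[k] d i)
        = ∑ i : Fin m, (φ (s (j.succAbove i)) - s (j.succAbove i))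
            ⊗ₜ[k] d (j.succAbove i) := by
      rw [Fin.sum_univ_succAbove (fun i => (φ (s i) - s i) ⊗ₜ[k] d i) j]
      rw [hsj, map_one, sub_self, TensorProduct.zero_tmul, zero_add]
    rw [hsplit] at hsub
    have hli' : LinearIndependent k fun i : Fin m =>
        Ideal.Quotient.mkₐ k b (d (j.succAbove i)) :=
      hli.comp j.succAbove j.succAbove_right_injective
    have hconst : ∀ i : Fin m,
        φ (s (j.succAbove i)) - s (j.succAbove i) = 0 :=
      ih (fun i => d (j.succAbove i)) _ hli' hsub
    -- each `s i` is a constant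
    have hc : ∀ i : Fin (m + 1), ∃ c : k, algebraMap k R c = s i := by
      intro i
      rcases eq_or_ne i j with rfl | hij
      · exact ⟨1, by rw [map_one, hsj]⟩
      · obtain ⟨i', rfl⟩ := Fin.exists_succAbove_eq hij
        exact (hrange _).1 (sub_eq_zero.mp (hconst i'))
    choose c hcs using hc
    have hcj : c j = 1 := by
      have := hcs j
      rw [hsj] at this
      exact (algebraMap k R).injective (by rw [this, map_one])
    -- `y = 1 ⊗ w` with `w = ∑ cᵢ • dᵢ`
    have hy : (∑ i, s i ⊗ₜ[k] d i) = (1 : R) ⊗ₜ[k] (∑ i, c i • d i) := by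
      rw [TensorProduct.tmul_sum]
      exact Finset.sum_congr rfl fun i _ => by
        rw [← hcs i, Algebra.algebraMap_eq_smul_one, TensorProduct.smul_tmul]
    rw [hy] at hsa
    have hwb : (∑ i, c i • d i) ∈ b := by
      rw [hb, Ideal.mem_comap]
      rwa [Algebra.TensorProduct.includeRight_apply]
    have hsum0 : (∑ i, c i • Ideal.Quotient.mkₐ k b (d i)) = 0 := by
      have h1 : (∑ i, c i • Ideal.Quotient.mkₐ k b (d i))
          = Ideal.Quotient.mkₐ k b (∑ i, c i • d i) := by
        rw [map_sum]
        exact Finset.sum_congr rfl fun i _ => (map_smul _ _ _).symm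
      rw [h1, Ideal.Quotient.mkₐ_eq_mk]
      exact Ideal.Quotient.eq_zero_iff_mem.mpr hwb
    have := Fintype.linearIndependent_iff.1 hli c hsum0 j
    rw [hcj] at this
    exact one_ne_zero this

/-- Reduction: every finite sum of pure tensors in `a` lies in `map includeRight (comap a)`. -/
private theorem red_aux (φ : R →+* R) (hsimple : DiffSimple φ)
    (hrange : ∀ r : R, φ r = r ↔ ∃ c : k, algebraMap k R c = r)
    (Φ : (R ⊗[k] D) →+* (R ⊗[k] D))
    (hΦ : ∀ (r : R) (d : D), Φ (r ⊗ₜ[k] d) = φ r ⊗ₜ[k] d)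
    (a : Ideal (R ⊗[k] D)) (ha : ∀ x ∈ a, Φ x ∈ a) :
    ∀ n (d : Fin n → D) (r : Fin n → R),
      (∑ i, r i ⊗ₜ[k] d i) ∈ a →
      (∑ i, r i ⊗ₜ[k] d i) ∈
        Ideal.map (Algebra.TensorProduct.includeRight : D →ₐ[k] R ⊗[k] D)
          (Ideal.comap (Algebra.TensorProduct.includeRight : D →ₐ[k] R ⊗[k] D) a) := by
  intro n
  induction n with
  | zero => intro d r _; simpa using Ideal.zero_mem _
  | succ m ih =>
    intro d r hmem
    set b : Ideal D :=
      a.comap (Algebra.TensorProduct.includeRight : D →ₐ[k] R ⊗[k] D) with hb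
    set a' : Ideal (R ⊗[k] D) :=
      Ideal.map (Algebra.TensorProduct.includeRight : D →ₐ[k] R ⊗[k] D) b with ha'
    have ha'a : a' ≤ a := Ideal.map_le_iff_le_comap.mpr le_rfl
    by_cases hli : LinearIndependent k fun i => Ideal.Quotient.mkₐ k b (d i)
    · have h0 := claim_aux φ hsimple hrange Φ hΦ a ha (m + 1) d r hli hmem
      have : (∑ i, r i ⊗ₜ[k] d i) = 0 := by
        apply Finset.sum_eq_zero
        intro i _
        rw [h0 i, TensorProduct.zero_tmul]
      rw [this]
      exact Ideal.zero_mem _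
    · obtain ⟨g, hg0, j, hgj⟩ := Fintype.not_linearIndependent_iff.1 hli
      set c : Fin (m + 1) → k := fun i => (g j)⁻¹ * g i with hcdef
      have hcj : c j = 1 := inv_mul_cancel₀ hgj
      set e : D := ∑ i, c i • d i with he
      have hwb : e ∈ b := by
        have hsum0 : Ideal.Quotient.mkₐ k b e = 0 := by
          rw [he, map_sum]
          have : (∑ i, Ideal.Quotient.mkₐ k b (c i • d i))
              = (g j)⁻¹ • ∑ i, g i • Ideal.Quotient.mkₐ k b (d i) := by
            rw [Finset.smul_sum]
            exact Finset.sum_congr rfl fun i _ => by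
              rw [map_smul, hcdef, smul_smul]
          rw [this, hg0, smul_zero]
        have := Ideal.Quotient.eq_zero_iff_mem.mp (by
          rwa [Ideal.Quotient.mkₐ_eq_mk] at hsum0)
        exact this
      -- rewrite the sum
      have hre : r j ⊗ₜ[k] e = ∑ i, (c i • r j) ⊗ₜ[k] d i := by
        rw [he, TensorProduct.tmul_sum]
        exact Finset.sum_congr rfl fun i _ => (TensorProduct.smul_tmul _ _ _).symm
      have hkey : (∑ i, r i ⊗ₜ[k] d i)
          = r j ⊗ₜ[k] e + ∑ i : Fin m,
            (r (j.succAbove i) - c (j.succAbove i) • r j) ⊗ₜ[k] d (j.succAbove i) := by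
        rw [hre, Fin.sum_univ_succAbove (fun i => (c i • r j) ⊗ₜ[k] d i) j,
          Fin.sum_univ_succAbove (fun i => r i ⊗ₜ[k] d i) j, hcj, one_smul,
          add_assoc, ← Finset.sum_add_distrib]
        congr 1
        exact Finset.sum_congr rfl fun i _ => by
          rw [← TensorProduct.add_tmul, add_sub_cancel]
      have hrje : r j ⊗ₜ[k] e ∈ a' := by
        have h1 : ((1 : R) ⊗ₜ[k] e) ∈ a' := by
          rw [ha']
          exact Ideal.mem_map_of_mem _ hwb
        have h2 : r j ⊗ₜ[k] e = (r j ⊗ₜ[k] (1 : D)) * ((1 : R) ⊗ₜ[k] e) := by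
          rw [Algebra.TensorProduct.tmul_mul_tmul, mul_one, one_mul]
        rw [h2]
        exact Ideal.mul_mem_left _ _ h1
      have htail : (∑ i : Fin m,
          (r (j.succAbove i) - c (j.succAbove i) • r j) ⊗ₜ[k] d (j.succAbove i)) ∈ a := by
        have : (∑ i : Fin m,
            (r (j.succAbove i) - c (j.succAbove i) • r j) ⊗ₜ[k] d (j.succAbove i))
            = (∑ i, r i ⊗ₜ[k] d i) - r j ⊗ₜ[k] e := by
          rw [hkey]; ring
        rw [this]
        exact a.sub_mem hmem (ha'a hrje)
      have := ih (fun i => d (j.succAbove i))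
        (fun i => r (j.succAbove i) - c (j.succAbove i) • r j) htail
      rw [hkey]
      exact Ideal.add_mem _ hrje this

end Aux

/-- Let `R` be a `φ`-simple `φ`-ring whose `φ`-constants are exactly the image of a field `k`,
let `D` be a commutative `k`-algebra, and let `Φ = φ ⊗ id` on `T = R ⊗[k] D`.  Then
`b ↦ Ideal.map includeRight b` and `a ↦ Ideal.comap includeRight a` are mutually inverse
bijections between the ideals of `D` and the `Φ`-stable ideals of `T`. -/
theorem ideal_correspondence_of_diffSimple_tensor
    {k R D : Type*} [Field k] [CommRing R] [Algebra k R] [CommRing D] [Algebra k D]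
    (φ : R →+* R) (hsimple : DiffSimple φ)
    (hfix : ∀ c : k, φ (algebraMap k R c) = algebraMap k R c)
    (hrange : ∀ r : R, φ r = r ↔ ∃ c : k, algebraMap k R c = r)
    (Φ : (R ⊗[k] D) →+* (R ⊗[k] D))
    (hΦ : ∀ (r : R) (d : D), Φ (r ⊗ₜ[k] d) = φ r ⊗ₜ[k] d) :
    (∀ b : Ideal D,
      (∀ x ∈ Ideal.map (Algebra.TensorProduct.includeRight : D →ₐ[k] R ⊗[k] D) b,
        Φ x ∈ Ideal.map (Algebra.TensorProduct.includeRight : D →ₐ[k] R ⊗[k] D) b) ∧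
      Ideal.comap (Algebra.TensorProduct.includeRight : D →ₐ[k] R ⊗[k] D)
        (Ideal.map (Algebra.TensorProduct.includeRight : D →ₐ[k] R ⊗[k] D) b) = b) ∧
    (∀ a : Ideal (R ⊗[k] D), (∀ x ∈ a, Φ x ∈ a) →
      Ideal.map (Algebra.TensorProduct.includeRight : D →ₐ[k] R ⊗[k] D)
        (Ideal.comap (Algebra.TensorProduct.includeRight : D →ₐ[k] R ⊗[k] D) a) = a) := by
  have hRnt : Nontrivial R := by
    rcases subsingleton_or_nontrivial R with h | h
    · exact absurd (Subsingleton.elim (⊥ : Ideal R) ⊤) hsimple.1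
    · exact h
  set ι : D →ₐ[k] R ⊗[k] D := Algebra.TensorProduct.includeRight with hι
  constructor
  · intro b
    constructor
    · -- stability of `map ι b`
      intro x hx
      have hcomp : Φ.comp (ι : D →+* R ⊗[k] D) = (ι : D →+* R ⊗[k] D) := by
        ext d
        simp only [RingHom.coe_comp, Function.comp_apply, RingHom.coe_coe, hι,
          Algebra.TensorProduct.includeRight_apply]
        rw [hΦ, map_one]
      have hmm : Ideal.map Φ (Ideal.map ι b) = Ideal.map ι b := by
        have h1 : Ideal.map ι b = Ideal.map (ι : D →+* R ⊗[k] D) b := rfl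
        rw [h1, Ideal.map_map, hcomp]
      have := Ideal.mem_map_of_mem Φ hx
      rwa [hmm] at this
    · -- comap (map b) = b
      refine le_antisymm ?_ Ideal.le_comap_map
      -- retraction g : R →ₗ[k] k with g ∘ algebraMap = id
      obtain ⟨g, hg⟩ := (Algebra.linearMap k R).exists_leftInverse_of_injective
        (LinearMap.ker_eq_bot.mpr (algebraMap k R).injective)
      set ε : (R ⊗[k] D) →ₗ[k] D :=
        (TensorProduct.lid k D).toLinearMap.comp
          (TensorProduct.map g LinearMap.id) with hε
      have hεtmul : ∀ (r : R) (d : D), ε (r ⊗ₜ[k] d) = g r • d := by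
        intro r d
        simp [hε]
      have key : ∀ x ∈ Ideal.map ι b, ∀ t : R ⊗[k] D, ε (t * x) ∈ b := by
        intro x hx
        have hx' : x ∈ Submodule.span (R ⊗[k] D) ((ι : D → R ⊗[k] D) '' b) := hx
        refine Submodule.span_induction
          (p := fun x _ => ∀ t : R ⊗[k] D, ε (t * x) ∈ b) ?_ ?_ ?_ ?_ hx'
        · rintro _ ⟨e, he, rfl⟩ t
          induction t using TensorProduct.induction_on with
          | zero => simpa using b.zero_mem
          | tmul r' d' =>
            have h1 : (r' ⊗ₜ[k] d') * (ι e) = r' ⊗ₜ[k] (d' * e) := by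
              rw [hι, Algebra.TensorProduct.includeRight_apply,
                Algebra.TensorProduct.tmul_mul_tmul, mul_one]
            rw [h1, hεtmul, Algebra.smul_def]
            exact Ideal.mul_mem_left _ _ (Ideal.mul_mem_left _ _ he)
          | add t₁ t₂ h1 h2 =>
            rw [add_mul, map_add]
            exact b.add_mem h1 h2
        · intro t
          rw [mul_zero, map_zero]
          exact b.zero_mem
        · intro x y _ _ hx hy t
          rw [mul_add, map_add]
          exact b.add_mem (hx t) (hy t)
        · intro s x _ hx t
          rw [smul_eq_mul, ← mul_assoc]
          exact hx (t * s)
      intro d hd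
      rw [Ideal.mem_comap] at hd
      have := key _ hd 1
      rw [one_mul, hι, Algebra.TensorProduct.includeRight_apply, hεtmul] at this
      have hg1 : g 1 = 1 := by
        have := LinearMap.congr_fun hg 1
        simpa using this
      rwa [hg1, one_smul] at this
  · intro a ha
    refine le_antisymm (Ideal.map_le_iff_le_comap.mpr le_rfl) ?_
    intro x hx
    obtain ⟨S, rfl⟩ := TensorProduct.exists_finset x
    set n := S.card with hn
    set eqv : Fin n ≃ {p // p ∈ S} := S.equivFin.symm with heqv
    have hrepr : (S.sum fun p => p.1 ⊗ₜ[k] p.2)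
        = ∑ i : Fin n, ((eqv i : R × D).1 ⊗ₜ[k] (eqv i : R × D).2) := by
      rw [← Finset.sum_attach S (fun p => p.1 ⊗ₜ[k] p.2)]
      exact (Equiv.sum_comp eqv fun p => (p : R × D).1 ⊗ₜ[k] (p : R × D).2).symm
    rw [hrepr] at hx ⊢
    exact red_aux φ hsimple hrange Φ hΦ a ha n
      (fun i => (eqv i : R × D).2) (fun i => (eqv i : R × D).1) hx
end

section
/- Let R be a φ-simple φ-ring, let k be a field, and suppose R is a k-algebra such that φ(algebraMap k R c) = algebraMap k R c for all c ∈ k and the range of algebraMap k R is exactly the subring R^φ of φ-constants. Let D be a field extension of k. Then R ⊗_k D, equipped with the ring endomorphism Φ := φ ⊗ id, is Φ-simple: its only Φ-stable ideals are the zero ideal and the whole ring. -/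
open scoped TensorProduct

set_option maxHeartbeats 1000000 in
/-- Let `R` be a `φ`-simple `φ`-ring whose `φ`-constants are exactly the image of a field `k`,
and let `D` be a field extension of `k`.  Then `R ⊗[k] D`, equipped with the endomorphism
`Φ = φ ⊗ id`, is `Φ`-simple. -/
theorem diffSimple_tensor_field_extension
    {k R D : Type*} [Field k] [CommRing R] [Algebra k R] [Field D] [Algebra k D]
    (φ : R →+* R) (hsimple : DiffSimple φ)
    (hfix : ∀ c : k, φ (algebraMap k R c) = algebraMap k R c)
    (hrange : ∀ r : R, φ r = r ↔ ∃ c : k, algebraMap k R c = r)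
    (Φ : (R ⊗[k] D) →+* (R ⊗[k] D))
    (hΦ : ∀ (r : R) (d : D), Φ (r ⊗ₜ[k] d) = φ r ⊗ₜ[k] d) :
    DiffSimple Φ := by
  classical
  obtain ⟨hbt, hsimp⟩ := hsimple
  have hR : Nontrivial R := by
    rcases subsingleton_or_nontrivial R with h | h
    · exact absurd (Subsingleton.elim (⊥ : Ideal R) ⊤) hbt
    · exact h
  have hinj : Function.Injective (algebraMap k R) := (algebraMap k R).injective
  set b : Module.Basis _ k D := Module.Basis.ofVectorSpace k D with hb
  set e : (R ⊗[k] D) ≃ₗ[k] (_ →₀ R) :=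
    TensorProduct.equivFinsuppOfBasisRight (M := R) b with he
  have htmul : ∀ (r : R) (d : D) (i), e (r ⊗ₜ[k] d) i = algebraMap k R (b.repr d i) * r := by
    intro r d i
    rw [he, TensorProduct.equivFinsuppOfBasisRight_apply_tmul_apply, Algebra.smul_def]
  have hΦe : ∀ x (i), e (Φ x) i = φ (e x i) := by
    intro x
    induction x using TensorProduct.induction_on with
    | zero => intro i; simp
    | tmul r d => intro i; rw [hΦ, htmul, htmul, map_mul, hfix]
    | add u v hu hv =>
        intro i
        rw [map_add, map_add, map_add, Finsupp.add_apply, Finsupp.add_apply, map_add, hu, hv]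
  have hmul : ∀ (r : R) (x) (i), e ((r ⊗ₜ[k] (1 : D)) * x) i = r * e x i := by
    intro r x
    induction x using TensorProduct.induction_on with
    | zero => intro i; simp
    | tmul s d =>
        intro i
        rw [Algebra.TensorProduct.tmul_mul_tmul, one_mul, htmul, htmul]; ring
    | add u v hu hv =>
        intro i
        rw [mul_add, map_add, map_add, Finsupp.add_apply, Finsupp.add_apply, hu, hv, mul_add]
  have hnt : (1 : R ⊗[k] D) ≠ 0 := by
    obtain ⟨i, hi⟩ : ∃ i, b.repr (1 : D) i ≠ 0 := by
      by_contra hc; push_neg at hc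
      exact one_ne_zero (b.repr.map_eq_zero_iff.mp (Finsupp.ext hc))
    intro h
    have h2 : e ((1 : R) ⊗ₜ[k] (1 : D)) i = 0 := by
      rw [← Algebra.TensorProduct.one_def, h, map_zero, Finsupp.coe_zero, Pi.zero_apply]
    rw [htmul, mul_one] at h2
    exact hi (hinj (h2.trans (map_zero _).symm))
  constructor
  · intro h
    have h1 : (1 : R ⊗[k] D) ∈ (⊥ : Ideal (R ⊗[k] D)) := h.symm ▸ Submodule.mem_top
    exact hnt (by simpa using h1)
  intro a ha
  by_cases h0 : a = ⊥
  · exact Or.inl h0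
  right
  obtain ⟨x₀, hx₀a, hx₀ne⟩ := Submodule.exists_mem_ne_zero_of_ne_bot h0
  have hP : ∃ n, ∃ x, x ∈ a ∧ x ≠ 0 ∧ (e x).support.card = n :=
    ⟨_, x₀, hx₀a, hx₀ne, rfl⟩
  set n := Nat.find hP with hn
  obtain ⟨x, hxa, hxne, hxcard⟩ := Nat.find_spec hP
  have hmin : ∀ y, y ∈ a → y ≠ 0 → n ≤ (e y).support.card := by
    intro y hy hyne
    exact Nat.find_le ⟨y, hy, hyne, rfl⟩
  have hexne : e x ≠ 0 := fun h => hxne (by simpa using e.injective (by simpa using h))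
  obtain ⟨i₀, hi₀⟩ := Finsupp.support_nonempty_iff.mpr hexne
  set S := (e x).support with hS
  -- the leading coefficient ideal
  set J : Ideal R :=
    { carrier := {r | ∃ y, y ∈ a ∧ (e y).support ⊆ S ∧ e y i₀ = r}
      add_mem' := by
        rintro r s ⟨y, hy, hys, hyr⟩ ⟨z, hz, hzs, hzr⟩
        refine ⟨y + z, a.add_mem hy hz, ?_, ?_⟩
        · rw [map_add]
          exact Finsupp.support_add.trans (Finset.union_subset hys hzs)
        · rw [map_add, Finsupp.add_apply, hyr, hzr]
      zero_mem' := ⟨0, a.zero_mem, by simp, by simp⟩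
      smul_mem' := by
        rintro c r ⟨y, hy, hys, hyr⟩
        refine ⟨(c ⊗ₜ[k] (1 : D)) * y, a.mul_mem_left _ hy, ?_, ?_⟩
        · intro i hi
          apply hys
          rw [Finsupp.mem_support_iff] at hi ⊢
          intro hzero
          rw [hmul, hzero, mul_zero] at hi
          exact hi rfl
        · rw [hmul, hyr, smul_eq_mul] } with hJ
  have hJstab : ∀ r ∈ J, φ r ∈ J := by
    rintro r ⟨y, hy, hys, hyr⟩
    refine ⟨Φ y, ha y hy, ?_, ?_⟩
    · intro i hi
      apply hys
      rw [Finsupp.mem_support_iff] at hi ⊢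
      intro hzero
      rw [hΦe, hzero, map_zero] at hi
      exact hi rfl
    · rw [hΦe, hyr]
  have hJne : J ≠ ⊥ := by
    intro h
    have : e x i₀ ∈ J := ⟨x, hxa, le_refl _, rfl⟩
    rw [h, Ideal.mem_bot] at this
    exact Finsupp.mem_support_iff.mp hi₀ this
  have hJtop : J = ⊤ := (hsimp J hJstab).resolve_left hJne
  have h1J : (1 : R) ∈ J := hJtop.symm ▸ Submodule.mem_top
  obtain ⟨y, hya, hys, hy1⟩ := h1J
  -- y has φ-constant coordinates
  have hz : Φ y - y = 0 := by
    by_contra hzne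
    have hza : Φ y - y ∈ a := a.sub_mem (ha y hya) hya
    have hsub : (e (Φ y - y)).support ⊆ S.erase i₀ := by
      intro i hi
      rw [Finsupp.mem_support_iff, map_sub, Finsupp.sub_apply, hΦe] at hi
      rcases eq_or_ne i i₀ with rfl | hne
      · rw [hy1] at hi; simp at hi
      · refine Finset.mem_erase.mpr ⟨hne, hys (Finsupp.mem_support_iff.mpr ?_)⟩
        intro h0'
        rw [h0', map_zero, sub_zero] at hi
        exact hi rfl
    have hle := (Finset.card_le_card hsub).trans_eq (Finset.card_erase_of_mem hi₀)
    have hnle := hmin _ hza hzne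
    have hpos : 0 < S.card := Finset.card_pos.mpr ⟨i₀, hi₀⟩
    omega
  have hfixy : ∀ i, φ (e y i) = e y i := by
    intro i
    have := congrArg (fun w => e w i) hz
    simp only [map_sub, Finsupp.sub_apply, map_zero, Finsupp.coe_zero, Pi.zero_apply] at this
    have h3 := sub_eq_zero.mp this
    calc φ (e y i) = e (Φ y) i := (hΦe y i).symm
      _ = e y i := h3
  let c : _ → k := fun i => Classical.choose ((hrange (e y i)).mp (hfixy i))
  have hc : ∀ i, algebraMap k R (c i) = e y i :=
    fun i => Classical.choose_spec ((hrange (e y i)).mp (hfixy i))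
  have hcsupp : ∀ i, c i ≠ 0 → i ∈ (e y).support := by
    intro i hci
    rw [Finsupp.mem_support_iff]
    intro h0'
    apply hci
    apply hinj
    rw [hc i, h0', map_zero]
  set f : _ →₀ k := Finsupp.onFinset (e y).support c hcsupp with hf
  set d : D := b.repr.symm f with hd
  have hrepr : b.repr d = f := by rw [hd, LinearEquiv.apply_symm_apply]
  have hyd : y = (1 : R) ⊗ₜ[k] d := by
    apply e.injective
    ext i
    rw [htmul, mul_one, hrepr]
    have : f i = c i := rfl
    rw [this, hc i]
  have hdne : d ≠ 0 := by
    intro h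
    have : f i₀ = 0 := by rw [← hrepr, h, map_zero, Finsupp.coe_zero, Pi.zero_apply]
    have hci₀ : c i₀ = 0 := this
    have : (1 : R) = 0 := by rw [← hy1, ← hc i₀, hci₀, map_zero]
    exact one_ne_zero this
  rw [Ideal.eq_top_iff_one]
  have : ((1 : R) ⊗ₜ[k] d⁻¹) * y ∈ a := a.mul_mem_left _ hya
  rw [hyd, Algebra.TensorProduct.tmul_mul_tmul, one_mul, inv_mul_cancel₀ hdne,
    ← Algebra.TensorProduct.one_def] at this
  exact this
end

section
/- Let K be a φ-simple φ-ring and let R be a K-φ-algebra, i.e., a commutative K-algebra with a ring endomorphism φ_R satisfying φ_R(algebraMap K R a) = algebraMap K R (φ(a)) for all a ∈ K. Then K and R^{φ_R} are linearly disjoint over K^φ: every family (v_i) of elements of the subring R^{φ_R} = {r ∈ R | φ_R(r) = r} that is linearly independent over the subring K^φ = {a ∈ K | φ(a) = a} (acting on R through algebraMap) is linearly independent over K (with R regarded as a K-module via algebraMap). -/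
/-- If `K` is a `φ`-simple `φ`-ring and `R` a `K`-`φ`-algebra, then `K` and the
`φ`-constants of `R` are linearly disjoint over the `φ`-constants of `K`: any family of
`φ`-constants of `R` that is linearly independent over `K^φ` is linearly independent
over `K`. -/
theorem linearly_disjoint_constants_of_diffSimple
    {K R ι : Type*} [CommRing K] [CommRing R] [Algebra K R]
    (φ : K →+* K) (φR : R →+* R) (hsimple : DiffSimple φ)
    (hcomp : ∀ a : K, φR (algebraMap K R a) = algebraMap K R (φ a))
    (v : ι → R) (hv : ∀ i, φR (v i) = v i)
    (hli : ∀ (s : Finset ι) (c : ι → K), (∀ i ∈ s, φ (c i) = c i) →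
      ∑ i ∈ s, algebraMap K R (c i) * v i = 0 → ∀ i ∈ s, c i = 0) :
    ∀ (s : Finset ι) (c : ι → K),
      ∑ i ∈ s, algebraMap K R (c i) * v i = 0 → ∀ i ∈ s, c i = 0 := by
  intro s
  induction s using Finset.strongInductionOn with
  | _ s ih =>
    intro c hc i0 hi0
    classical
    by_contra hne
    -- the ideal of `i0`-coefficients of relations supported on `s`
    set I : Ideal K :=
      { carrier := {a | ∃ d : ι → K, d i0 = a ∧ ∑ i ∈ s, algebraMap K R (d i) * v i = 0}
        zero_mem' := ⟨0, rfl, by simp⟩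
        add_mem' := by
          rintro a b ⟨d1, rfl, h1⟩ ⟨d2, rfl, h2⟩
          exact ⟨d1 + d2, rfl, by
            simp only [Pi.add_apply, map_add, add_mul, Finset.sum_add_distrib, h1, h2,
              add_zero]⟩
        smul_mem' := by
          rintro a b ⟨d, rfl, h⟩
          refine ⟨fun i => a * d i, rfl, ?_⟩
          have : ∑ i ∈ s, algebraMap K R (a * d i) * v i
              = algebraMap K R a * ∑ i ∈ s, algebraMap K R (d i) * v i := by
            rw [Finset.mul_sum]
            exact Finset.sum_congr rfl fun i _ => by rw [map_mul, mul_assoc]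
          rw [this, h, mul_zero] } with hI
    have hIφ : ∀ x ∈ I, φ x ∈ I := by
      rintro x ⟨d, rfl, h⟩
      refine ⟨fun i => φ (d i), rfl, ?_⟩
      have : ∑ i ∈ s, algebraMap K R (φ (d i)) * v i
          = φR (∑ i ∈ s, algebraMap K R (d i) * v i) := by
        rw [map_sum]
        exact Finset.sum_congr rfl fun i _ => by rw [map_mul, hcomp, hv]
      rw [this, h, map_zero]
    have hne' : I ≠ ⊥ := by
      intro hbot
      apply hne
      have : c i0 ∈ I := ⟨c, rfl, hc⟩
      rw [hbot] at this
      simpa using this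
    have htop : I = ⊤ := (hsimple.2 I hIφ).resolve_left hne'
    have hone : (1 : K) ∈ I := htop ▸ Submodule.mem_top
    obtain ⟨d, hd0, hdsum⟩ := hone
    -- subtract the φ-image of the relation: a relation supported on `s.erase i0`
    set e : ι → K := fun i => φ (d i) - d i with he
    have hesum : ∑ i ∈ s, algebraMap K R (e i) * v i = 0 := by
      have h1 : ∑ i ∈ s, algebraMap K R (φ (d i)) * v i = 0 := by
        have : ∑ i ∈ s, algebraMap K R (φ (d i)) * v i
            = φR (∑ i ∈ s, algebraMap K R (d i) * v i) := by
          rw [map_sum]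
          exact Finset.sum_congr rfl fun i _ => by rw [map_mul, hcomp, hv]
        rw [this, hdsum, map_zero]
      calc ∑ i ∈ s, algebraMap K R (e i) * v i
          = ∑ i ∈ s, (algebraMap K R (φ (d i)) * v i - algebraMap K R (d i) * v i) := by
            exact Finset.sum_congr rfl fun i _ => by rw [he]; rw [map_sub, sub_mul]
        _ = 0 := by rw [Finset.sum_sub_distrib, h1, hdsum, sub_zero]
    have he0 : e i0 = 0 := by simp [he, hd0]
    have hesum' : ∑ i ∈ s.erase i0, algebraMap K R (e i) * v i = 0 := by
      have h2 := Finset.add_sum_erase s (fun i => algebraMap K R (e i) * v i) hi0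
      simp only [he0, map_zero, zero_mul, zero_add] at h2
      rw [h2, hesum]
    have hconst : ∀ i ∈ s, φ (d i) = d i := by
      intro i hi
      rcases eq_or_ne i i0 with rfl | hne2
      · rw [hd0, map_one]
      · have := ih (s.erase i0) (Finset.erase_ssubset hi0) e hesum' i
          (Finset.mem_erase.mpr ⟨hne2, hi⟩)
        exact sub_eq_zero.mp this
    have h10 : (1 : K) = 0 := hd0 ▸ hli s d hconst hdsum i0 hi0
    exact hsimple.1 (by rw [Ideal.eq_top_iff_one]; simp [h10])
end

section
/- Let R be a commutative ring equipped with two commuting ring endomorphisms φ and σ (a φσ-ring). Assume R is φ-simple and that R is a φ-pseudo domain. Then: (1) σ is injective on R; and (2) the zero ideal of R is a finite intersection of σ-pseudo prime ideals, i.e., there are finitely many ideals p_1, …, p_m of R, each σ-pseudo prime, with p_1 ∩ … ∩ p_m = (0). -/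
/-- An ideal `p` of a ring with endomorphism `σ` is `σ`-pseudo prime if
`p = q ∩ σ⁻¹(q) ∩ … ∩ σ^{-(d-1)}(q)` for some `d ≥ 1` and some `σ^d`-prime ideal `q`
(i.e. a prime ideal with `(σ^d)⁻¹(q) = q`). -/
def PseudoPrime {R : Type*} [CommRing R] (σ : R →+* R) (p : Ideal R) : Prop :=
  ∃ d : ℕ, 1 ≤ d ∧ ∃ q : Ideal R, q.IsPrime ∧ Ideal.comap (σ ^ d) q = q ∧
    p = ⨅ i ∈ Finset.range d, Ideal.comap (σ ^ i) q

/-- A ring with endomorphism `φ` is a `φ`-pseudo domain if its zero ideal is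
`φ`-pseudo prime. -/
def PseudoDomain {R : Type*} [CommRing R] (φ : R →+* R) : Prop :=
  PseudoPrime φ (⊥ : Ideal R)

private lemma comap_pow_add_eq {R : Type*} [CommRing R] (f : R →+* R) (I : Ideal R) (a b : ℕ) :
    Ideal.comap (f ^ (a + b)) I = Ideal.comap (f ^ b) (Ideal.comap (f ^ a) I) := by
  ext x
  simp [Ideal.mem_comap, RingHom.coe_pow, Function.iterate_add_apply]

private lemma comap_pow_zero_eq {R : Type*} [CommRing R] (f : R →+* R) (I : Ideal R) :
    Ideal.comap (f ^ 0) I = I := by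
  ext x
  simp [Ideal.mem_comap, RingHom.coe_pow]

private lemma mem_finset_sup_ideal {R ι : Type*} [CommRing R] (s : Finset ι) (f : ι → Ideal R)
    (x : R) (hx : x ∈ s.sup f) : ∃ g : ι → R, (∀ i, g i ∈ f i) ∧ x = ∑ i ∈ s, g i := by
  classical
  induction s using Finset.cons_induction generalizing x with
  | empty => exact ⟨0, fun i => (f i).zero_mem, by simpa using hx⟩
  | cons a s ha ih =>
    rw [Finset.sup_cons] at hx
    obtain ⟨y, hy, z, hz, rfl⟩ := Submodule.mem_sup.mp hx
    obtain ⟨g, hg, rfl⟩ := ih z hz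
    refine ⟨Function.update g a y, ?_, ?_⟩
    · intro i
      rcases eq_or_ne i a with rfl | h
      · simpa using hy
      · simpa [Function.update_of_ne h] using hg i
    · rw [Finset.sum_cons, Function.update_self]
      congr 1
      exact Finset.sum_congr rfl fun i hi =>
        (Function.update_of_ne (ne_of_mem_of_not_mem hi ha) _ _).symm

/-- Let `R` be a `φ`-simple `φσ`-ring that is a `φ`-pseudo domain.  Then `σ` is injective
on `R` and the zero ideal of `R` is a finite intersection of `σ`-pseudo prime ideals. -/
theorem sigma_injective_and_zero_is_finite_inter_of_pseudoDomain
    {R : Type*} [CommRing R] (φ σ : R →+* R)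
    (hcomm : φ.comp σ = σ.comp φ)
    (hsimple : DiffSimple φ) (hdom : PseudoDomain φ) :
    Function.Injective σ ∧
    ∃ (m : ℕ) (p : Fin m → Ideal R), (∀ i, PseudoPrime σ (p i)) ∧ (⨅ i, p i) = ⊥ := by
  classical
  obtain ⟨d, hd1, q, hq, hqper, hzero⟩ := hdom
  have hnzero : (1 : R) ≠ 0 := by
    intro h
    exact hsimple.1 ((Ideal.eq_top_iff_one _).mpr (h ▸ Ideal.zero_mem (⊥ : Ideal R)))
  have hinj : Function.Injective σ := by
    rw [RingHom.injective_iff_ker_eq_bot]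
    have hstab : ∀ x ∈ RingHom.ker σ, φ x ∈ RingHom.ker σ := by
      intro x hx
      rw [RingHom.mem_ker] at hx ⊢
      have := RingHom.congr_fun hcomm x
      simp only [RingHom.coe_comp, Function.comp_apply] at this
      rw [← this, hx, map_zero]
    rcases hsimple.2 (RingHom.ker σ) hstab with h | h
    · exact h
    · exfalso
      have h1 : (1 : R) ∈ RingHom.ker σ := h ▸ Submodule.mem_top
      rw [RingHom.mem_ker, map_one] at h1
      exact hnzero h1
  have hd0 : 0 < d := hd1
  set P : ℕ → Ideal R := fun i => Ideal.comap (φ ^ i) q with hPdef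
  have hPd : ∀ i, P (i + d) = P i := by
    intro i
    show Ideal.comap (φ ^ (i + d)) q = Ideal.comap (φ ^ i) q
    rw [add_comm, comap_pow_add_eq, hqper]
  have hPmul : ∀ j k, P (k + d * j) = P k := by
    intro j
    induction j with
    | zero => simp
    | succ j ih =>
      intro k
      have : k + d * (j + 1) = (k + d * j) + d := by ring
      rw [this, hPd, ih]
  have hPmod : ∀ i, P i = P (i % d) := by
    intro i
    conv_lhs => rw [← Nat.mod_add_div i d]
    exact hPmul (i / d) (i % d)
  set F : Finset (Ideal R) := (Finset.range d).image P with hFdef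
  have hPF : ∀ i, P i ∈ F := by
    intro i
    rw [hPmod i]
    exact Finset.mem_image_of_mem P (Finset.mem_range.mpr (Nat.mod_lt i hd0))
  have hFP : ∀ J ∈ F, ∃ i, J = P i := by
    intro J hJ
    obtain ⟨i, _, rfl⟩ := Finset.mem_image.mp hJ
    exact ⟨i, rfl⟩
  have hFprime : ∀ J ∈ F, J.IsPrime := by
    intro J hJ
    obtain ⟨i, rfl⟩ := hFP J hJ
    exact Ideal.IsPrime.comap (φ ^ i)
  have hFbot : F.inf id = ⊥ := by
    rw [hFdef, Finset.inf_image]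
    have : (id ∘ P) = P := rfl
    rw [this, Finset.inf_eq_iInf, hzero]
  have hcomapφP : ∀ i, Ideal.comap φ (P i) = P (i + 1) := by
    intro i
    show _ = Ideal.comap (φ ^ (i + 1)) q
    rw [comap_pow_add_eq, pow_one]
  have hcomapd1 : ∀ i, Ideal.comap (φ ^ (d - 1)) (P (i + 1)) = P i := by
    intro i
    have h1 : i + 1 + (d - 1) = i + d := by omega
    have := comap_pow_add_eq φ q (i + 1) (d - 1)
    rw [h1] at this
    rw [← this]
    exact hPd i
  have hreflφ : ∀ i j, Ideal.comap φ (P i) ≤ Ideal.comap φ (P j) → P i ≤ P j := by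
    intro i j h
    rw [hcomapφP, hcomapφP] at h
    have := Ideal.comap_mono (f := φ ^ (d - 1)) h
    rwa [hcomapd1, hcomapd1] at this
  have hφinjF : ∀ i j, Ideal.comap φ (P i) = Ideal.comap φ (P j) → P i = P j := by
    intro i j h
    exact le_antisymm (hreflφ i j h.le) (hreflφ j i h.ge)
  set Min : Finset (Ideal R) := F.filter (fun J => ∀ K ∈ F, K ≤ J → K = J) with hMindef
  have hMinF : Min ⊆ F := Finset.filter_subset _ _
  have hMinmin : ∀ m ∈ Min, ∀ K ∈ F, K ≤ m → K = m := fun m hm => (Finset.mem_filter.mp hm).2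
  have hminex : ∀ A ∈ F, ∃ m ∈ Min, m ≤ A := by
    intro A hA
    obtain ⟨b, hbA, hbmin⟩ := F.exists_le_minimal hA
    refine ⟨b, Finset.mem_filter.mpr ⟨hbmin.1, fun K hK hKb => le_antisymm hKb (hbmin.2 hK hKb)⟩, hbA⟩
  have hMinne : Min.Nonempty := by
    obtain ⟨m, hm, _⟩ := hminex (P 0) (hPF 0)
    exact ⟨m, hm⟩
  have hMinprime : ∀ m ∈ Min, m.IsPrime := fun m hm => hFprime m (hMinF hm)
  have hMinbot : Min.inf id = ⊥ := by
    refine le_antisymm ?_ bot_le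
    rw [← hFbot]
    refine Finset.le_inf fun A hA => ?_
    obtain ⟨m, hm, hmA⟩ := hminex A hA
    exact (Finset.inf_le hm).trans hmA
  set aI : Ideal R → Ideal R := fun m => (Min.erase m).inf id with haIdef
  have h_am_le : ∀ m m' : Ideal R, m' ∈ Min → m' ≠ m → aI m ≤ m' := by
    intro m m' hm' hne
    exact Finset.inf_le (Finset.mem_erase.mpr ⟨hne, hm'⟩)
  have h_am_not_le : ∀ m ∈ Min, ¬ aI m ≤ m := by
    intro m hm hle
    obtain ⟨m', hm', hm'le⟩ := ((hMinprime m hm).inf_le').mp hle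
    exact Finset.ne_of_mem_erase hm'
      (hMinmin m hm m' (hMinF (Finset.mem_of_mem_erase hm')) hm'le)
  have hpair : ∀ m ∈ Min, ∀ m' ∈ Min, m ≠ m' → ∀ x, x ∈ aI m → x ∈ aI m' → x = 0 := by
    intro m hm m' hm' hne x hx hx'
    have : x ∈ Min.inf id := by
      rw [Submodule.mem_finsetInf]
      intro m'' hm''
      rcases eq_or_ne m'' m with rfl | h
      · exact Submodule.mem_finsetInf.mp hx' m'' (Finset.mem_erase.mpr ⟨hne, hm''⟩)
      · exact Submodule.mem_finsetInf.mp hx m'' (Finset.mem_erase.mpr ⟨h, hm''⟩)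
    rwa [hMinbot, Ideal.mem_bot] at this
  have h_m_inf : ∀ m ∈ Min, ∀ x, x ∈ m → x ∈ aI m → x = 0 := by
    intro m hm x hxm hxa
    have : x ∈ Min.inf id := by
      rw [Submodule.mem_finsetInf]
      intro m'' hm''
      rcases eq_or_ne m'' m with rfl | h
      · exact hxm
      · exact Submodule.mem_finsetInf.mp hxa m'' (Finset.mem_erase.mpr ⟨h, hm''⟩)
    rwa [hMinbot, Ideal.mem_bot] at this
  have hcomapφF : ∀ A ∈ F, Ideal.comap φ A ∈ F := by
    intro A hA
    obtain ⟨i, rfl⟩ := hFP A hA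
    rw [hcomapφP]
    exact hPF _
  have hφsurjF : ∀ A ∈ F, ∃ B ∈ F, Ideal.comap φ B = A := by
    intro A hA
    obtain ⟨i, rfl⟩ := hFP A hA
    refine ⟨P (i + (d - 1)), hPF _, ?_⟩
    rw [hcomapφP]
    have : i + (d - 1) + 1 = i + d := by omega
    rw [this, hPd]
  have hcomapφinjF : ∀ A ∈ F, ∀ B ∈ F, Ideal.comap φ A = Ideal.comap φ B → A = B := by
    intro A hA B hB h
    obtain ⟨i, rfl⟩ := hFP A hA
    obtain ⟨j, rfl⟩ := hFP B hB
    exact hφinjF i j h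
  have hcomapφMin : ∀ m ∈ Min, Ideal.comap φ m ∈ Min := by
    intro m hm
    refine Finset.mem_filter.mpr ⟨hcomapφF m (hMinF hm), ?_⟩
    intro K hK hKle
    obtain ⟨B, hB, rfl⟩ := hφsurjF K hK
    have hBm : B ≤ m := by
      obtain ⟨i, rfl⟩ := hFP B hB
      obtain ⟨j, rfl⟩ := hFP m (hMinF hm)
      exact hreflφ i j hKle
    rw [hMinmin m hm B hB hBm]
  have hφsurjMin : ∀ m ∈ Min, ∃ m' ∈ Min, Ideal.comap φ m' = m := by
    intro m hm
    obtain ⟨B, hB, hBm⟩ := hφsurjF m (hMinF hm)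
    refine ⟨B, Finset.mem_filter.mpr ⟨hB, ?_⟩, hBm⟩
    intro K hK hKB
    have h1 : Ideal.comap φ K ≤ m := hBm ▸ Ideal.comap_mono hKB
    have h2 : Ideal.comap φ K = m := hMinmin m hm _ (hcomapφF K hK) h1
    exact hcomapφinjF K hK B hB (h2.trans hBm.symm)
  have hφtrans : ∀ m ∈ Min, ∃ m₂ ∈ Min, ∀ x ∈ aI m, φ x ∈ aI m₂ := by
    intro m hm
    obtain ⟨m₂, hm₂, hm₂m⟩ := hφsurjMin m hm
    refine ⟨m₂, hm₂, fun x hx => ?_⟩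
    rw [haIdef, Submodule.mem_finsetInf]
    intro m'' hm''
    obtain ⟨hne, hm''Min⟩ := Finset.mem_erase.mp hm''
    have hcm'' : Ideal.comap φ m'' ∈ Min := hcomapφMin m'' hm''Min
    have hcne : Ideal.comap φ m'' ≠ m := by
      intro hEq
      exact hne (hcomapφinjF m'' (hMinF hm''Min) m₂ (hMinF hm₂) (hEq.trans hm₂m.symm))
    exact h_am_le m _ hcm'' hcne hx
  set b : Ideal R := Min.sup aI with hbdef
  have hstab : ∀ x ∈ b, φ x ∈ b := by
    intro x hx
    obtain ⟨g, hg, rfl⟩ := mem_finset_sup_ideal Min aI x hx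
    rw [map_sum]
    refine Ideal.sum_mem _ fun m hm => ?_
    obtain ⟨m₂, hm₂, h⟩ := hφtrans m hm
    exact Finset.le_sup (f := aI) hm₂ (h (g m) (hg m))
  have hbtop : b = ⊤ := by
    rcases hsimple.2 b hstab with h | h
    · exfalso
      obtain ⟨m₀, hm₀⟩ := hMinne
      refine h_am_not_le m₀ hm₀ ?_
      calc aI m₀ ≤ b := Finset.le_sup hm₀
        _ = ⊥ := h
        _ ≤ m₀ := bot_le
    · exact h
  obtain ⟨e, he, hsum⟩ := mem_finset_sup_ideal Min aI 1 (by rw [← hbdef, hbtop]; exact Submodule.mem_top : (1:R) ∈ Min.sup aI)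
  have horth : ∀ m ∈ Min, ∀ m' ∈ Min, m ≠ m' → e m * e m' = 0 := by
    intro m hm m' hm' hne
    exact hpair m hm m' hm' hne _ (Ideal.mul_mem_right _ _ (he m)) (Ideal.mul_mem_left _ _ (he m'))
  have hxe : ∀ m ∈ Min, ∀ x ∈ aI m, x * e m = x := by
    intro m hm x hx
    have h1 : x * 1 = x * e m := by
      rw [hsum, Finset.mul_sum]
      refine Finset.sum_eq_single_of_mem m hm fun m' hm' hne => ?_
      exact hpair m hm m' hm' hne.symm _ (Ideal.mul_mem_right _ _ hx)
        (Ideal.mul_mem_left _ _ (he m'))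
    rw [← h1, mul_one]
  have hidem : ∀ m ∈ Min, e m * e m = e m := fun m hm => hxe m hm (e m) (he m)
  have h_e_not : ∀ m ∈ Min, e m ∉ m := by
    intro m hm hmem
    refine (hMinprime m hm).ne_top (Ideal.eq_top_iff_one _ |>.mpr ?_)
    rw [hsum]
    refine Ideal.sum_mem _ fun m' hm' => ?_
    rcases eq_or_ne m' m with rfl | hne
    · exact hmem
    · exact h_am_le m' m hm hne.symm (he m')
  have hAnn : ∀ m ∈ Min, ∀ y : R, y ∈ m ↔ y * e m = 0 := by
    intro m hm y
    constructor
    · intro hy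
      exact h_m_inf m hm _ (Ideal.mul_mem_right _ _ hy) (Ideal.mul_mem_left _ _ (he m))
    · intro hy
      have h1 : y = ∑ m' ∈ Min, y * e m' := by rw [← Finset.mul_sum, ← hsum, mul_one]
      rw [h1]
      refine Ideal.sum_mem _ fun m' hm' => ?_
      rcases eq_or_ne m' m with rfl | hne
      · rw [hy]; exact Ideal.zero_mem _
      · exact Ideal.mul_mem_left _ _ (h_am_le m' m hm hne.symm (he m'))
  have h01 : ∀ u : R, u * u = u → ∀ m ∈ Min, u * e m = 0 ∨ u * e m = e m := by
    intro u hu m hm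
    have h0 : (u * e m) * (u * e m - e m) = 0 := by
      have hexp : (u * e m) * (u * e m - e m) = (u * u) * (e m * e m) - u * (e m * e m) := by ring
      rw [hu, hidem m hm] at hexp
      rw [hexp, sub_self]
    rcases (hMinprime m hm).mem_or_mem (show (u * e m) * (u * e m - e m) ∈ m by
      rw [h0]; exact Ideal.zero_mem m) with hc | hc
    · left
      have := (hAnn m hm _).mp hc
      calc u * e m = u * (e m * e m) := by rw [hidem m hm]
        _ = (u * e m) * e m := by ring
        _ = 0 := this
    · right
      have h2 := (hAnn m hm _).mp hc
      have h3 : (u * e m - e m) * e m = u * e m - e m := by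
        have : (u * e m - e m) * e m = u * (e m * e m) - e m * e m := by ring
        rw [this, hidem m hm]
      rw [h3] at h2
      exact sub_eq_zero.mp h2
  have h_e_ne0 : ∀ m ∈ Min, e m ≠ 0 := fun m hm h => h_e_not m hm (h ▸ Ideal.zero_mem m)
  have h_e_inj : ∀ m ∈ Min, ∀ m' ∈ Min, e m = e m' → m = m' := by
    intro m hm m' hm' hee
    by_contra hne
    refine h_e_ne0 m hm ?_
    calc e m = e m * e m := (hidem m hm).symm
      _ = e m * e m' := by rw [hee]
      _ = 0 := horth m hm m' hm' hne
  have hτ : ∀ m ∈ Min, ∃ m', m' ∈ Min ∧ σ (e m) = e m' := by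
    set S : Ideal R → Finset (Ideal R) := fun m => Min.filter (fun m' => σ (e m) * e m' ≠ 0)
      with hSdef
    have hSsub : ∀ m, S m ⊆ Min := fun m => Finset.filter_subset _ _
    have hidem' : ∀ m ∈ Min, σ (e m) * σ (e m) = σ (e m) := by
      intro m hm; rw [← map_mul, hidem m hm]
    have hS01 : ∀ m ∈ Min, ∀ m' ∈ S m, σ (e m) * e m' = e m' := by
      intro m hm m' hm'
      obtain ⟨hm'Min, hne0⟩ := Finset.mem_filter.mp hm'
      rcases h01 (σ (e m)) (hidem' m hm) m' hm'Min with h | h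
      · exact absurd h hne0
      · exact h
    have hurep : ∀ m ∈ Min, σ (e m) = ∑ m' ∈ S m, e m' := by
      intro m hm
      have h1 : σ (e m) = ∑ m' ∈ Min, σ (e m) * e m' := by
        rw [← Finset.mul_sum, ← hsum, mul_one]
      have h2 : ∑ m' ∈ S m, σ (e m) * e m' = ∑ m' ∈ Min, σ (e m) * e m' :=
        Finset.sum_filter_of_ne (fun m' _ h => h)
      rw [h1, ← h2]
      exact Finset.sum_congr rfl (fun m' hm' => hS01 m hm m' hm')
    have hSne : ∀ m ∈ Min, (S m).Nonempty := by
      intro m hm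
      rw [Finset.nonempty_iff_ne_empty]
      intro hempty
      have h0 : σ (e m) = 0 := by rw [hurep m hm, hempty, Finset.sum_empty]
      exact h_e_ne0 m hm (hinj (by rw [h0, map_zero]))
    have hdisj : ∀ m₁ ∈ Min, ∀ m₂ ∈ Min, m₁ ≠ m₂ → Disjoint (S m₁) (S m₂) := by
      intro m₁ hm₁ m₂ hm₂ hne
      rw [Finset.disjoint_left]
      intro m' hm'1 hm'2
      have h1 : σ (e m₁) * e m' = e m' := hS01 m₁ hm₁ m' hm'1
      have h2 : σ (e m₂) * e m' = e m' := hS01 m₂ hm₂ m' hm'2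
      have hm'Min : m' ∈ Min := hSsub m₁ hm'1
      refine h_e_ne0 m' hm'Min ?_
      calc e m' = σ (e m₁) * (σ (e m₂) * e m') := by rw [h2, h1]
        _ = σ (e m₁ * e m₂) * e m' := by rw [map_mul]; ring
        _ = 0 := by rw [horth m₁ hm₁ m₂ hm₂ hne, map_zero, zero_mul]
    have hcover : ∀ m' ∈ Min, ∃ m ∈ Min, m' ∈ S m := by
      intro m' hm'
      by_contra hcon
      push_neg at hcon
      have hall : ∀ m ∈ Min, σ (e m) * e m' = 0 := by
        intro m hm
        have := hcon m hm
        rw [hSdef, Finset.mem_filter, not_and, not_not] at this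
        exact this hm'
      refine h_e_ne0 m' hm' ?_
      have hone : (1 : R) = ∑ m ∈ Min, σ (e m) := by
        rw [← map_sum, ← hsum, map_one]
      calc e m' = 1 * e m' := (one_mul _).symm
        _ = ∑ m ∈ Min, σ (e m) * e m' := by rw [hone, Finset.sum_mul]
        _ = 0 := Finset.sum_eq_zero hall
    have hbiU : Min.biUnion S = Min := by
      ext A
      rw [Finset.mem_biUnion]
      constructor
      · rintro ⟨m, hm, hA⟩; exact hSsub m hA
      · intro hA; exact hcover A hA
    have hcardsum : ∑ m ∈ Min, (S m).card = Min.card := by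
      rw [← Finset.card_biUnion hdisj, hbiU]
    have hcard1 : ∀ m ∈ Min, (S m).card = 1 := by
      intro m hm
      by_contra hne
      have h2 : 1 < (S m).card :=
        lt_of_le_of_ne (Finset.card_pos.mpr (hSne m hm)) (Ne.symm hne)
      have hlt : ∑ _m ∈ Min, 1 < ∑ m ∈ Min, (S m).card :=
        Finset.sum_lt_sum (fun i hi => Finset.card_pos.mpr (hSne i hi)) ⟨m, hm, h2⟩
      rw [hcardsum, Finset.sum_const, smul_eq_mul, mul_one] at hlt
      exact lt_irrefl _ hlt
    intro m hm
    obtain ⟨m', hSm⟩ := Finset.card_eq_one.mp (hcard1 m hm)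
    have hm'S : m' ∈ S m := by rw [hSm]; exact Finset.mem_singleton_self m'
    refine ⟨m', hSsub m hm'S, ?_⟩
    rw [hurep m hm, hSm, Finset.sum_singleton]
  have hpre : ∀ m ∈ Min, ∃ m'', m'' ∈ Min ∧ σ (e m'') = e m := by
    choose t ht hσt using hτ
    have hsurj := Finset.surj_on_of_inj_on_of_card_le (s := Min) (t := Min) t ht
      (fun m₁ m₂ hm₁ hm₂ heq =>
        h_e_inj m₁ hm₁ m₂ hm₂ (hinj (by rw [hσt m₁ hm₁, hσt m₂ hm₂, heq])))
      le_rfl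
    intro m hm
    obtain ⟨a, ha, hb⟩ := hsurj m hm
    exact ⟨a, ha, by rw [hσt a ha, ← hb]⟩
  have hcomapσ : ∀ m ∈ Min, ∃ m'', m'' ∈ Min ∧ σ (e m'') = e m ∧ Ideal.comap σ m = m'' := by
    intro m hm
    obtain ⟨m'', hm'', hσe⟩ := hpre m hm
    refine ⟨m'', hm'', hσe, ?_⟩
    ext x
    rw [Ideal.mem_comap]
    constructor
    · intro hx
      have h1 : σ x * e m = 0 := (hAnn m hm _).mp hx
      rw [← hσe, ← map_mul] at h1
      have h2 : x * e m'' = 0 := hinj (by rw [h1, map_zero])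
      exact (hAnn m'' hm'' x).mpr h2
    · intro hx
      have h2 : x * e m'' = 0 := (hAnn m'' hm'' x).mp hx
      refine (hAnn m hm _).mpr ?_
      rw [← hσe, ← map_mul, h2, map_zero]
  have hcomapσMin : ∀ m ∈ Min, Ideal.comap σ m ∈ Min := by
    intro m hm
    obtain ⟨m'', h1, _, h3⟩ := hcomapσ m hm
    rw [h3]; exact h1
  have hcomapσinj : ∀ m₁ ∈ Min, ∀ m₂ ∈ Min,
      Ideal.comap σ m₁ = Ideal.comap σ m₂ → m₁ = m₂ := by
    intro m₁ hm₁ m₂ hm₂ h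
    obtain ⟨a₁, ha₁, he₁, hc₁⟩ := hcomapσ m₁ hm₁
    obtain ⟨a₂, ha₂, he₂, hc₂⟩ := hcomapσ m₂ hm₂
    have haa : a₁ = a₂ := by rw [← hc₁, ← hc₂, h]
    refine h_e_inj m₁ hm₁ m₂ hm₂ ?_
    rw [← he₁, ← he₂, haa]
  have hiterMin : ∀ k, ∀ m ∈ Min, Ideal.comap (σ ^ k) m ∈ Min := by
    intro k
    induction k with
    | zero => intro m hm; rw [comap_pow_zero_eq]; exact hm
    | succ k ih =>
      intro m hm
      rw [comap_pow_add_eq σ m k 1, pow_one]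
      exact hcomapσMin _ (ih m hm)
  have hcancel : ∀ k, ∀ m₁ ∈ Min, ∀ m₂ ∈ Min,
      Ideal.comap (σ ^ k) m₁ = Ideal.comap (σ ^ k) m₂ → m₁ = m₂ := by
    intro k
    induction k with
    | zero => intro m₁ _ m₂ _ h; rwa [comap_pow_zero_eq, comap_pow_zero_eq] at h
    | succ k ih =>
      intro m₁ hm₁ m₂ hm₂ h
      rw [show k + 1 = 1 + k from Nat.add_comm k 1, comap_pow_add_eq, comap_pow_add_eq,
        pow_one] at h
      exact hcomapσinj m₁ hm₁ m₂ hm₂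
        (ih _ (hcomapσMin m₁ hm₁) _ (hcomapσMin m₂ hm₂) h)
  have hper : ∀ m ∈ Min, ∃ N, 1 ≤ N ∧ Ideal.comap (σ ^ N) m = m := by
    intro m hm
    have key : ∀ k l : ℕ, k < l →
        Ideal.comap (σ ^ k) m = Ideal.comap (σ ^ l) m → ∃ N, 1 ≤ N ∧ Ideal.comap (σ ^ N) m = m := by
      intro k l hkl heq
      have hld : (l - k) + k = l := by omega
      have h2 : Ideal.comap (σ ^ l) m = Ideal.comap (σ ^ k) (Ideal.comap (σ ^ (l - k)) m) := by
        rw [← comap_pow_add_eq, hld]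
      rw [h2] at heq
      have := hcancel k m hm _ (hiterMin (l - k) m hm) heq
      exact ⟨l - k, by omega, this.symm⟩
    obtain ⟨k, hk, l, hl, hkl, heq⟩ := Finset.exists_ne_map_eq_of_card_lt_of_maps_to
      (s := Finset.range (Min.card + 1)) (t := Min)
      (by rw [Finset.card_range]; omega)
      (fun k _ => hiterMin k m hm)
    rcases hkl.lt_or_gt with h | h
    · exact key k l h heq
    · exact key l k h heq.symm
  set msel : Fin Min.card → Ideal R := fun i => ((Min.equivFin.symm i : {x // x ∈ Min}) : Ideal R)
    with hmseldef
  have hmselMin : ∀ i, msel i ∈ Min := fun i => (Min.equivFin.symm i).2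
  have hmselsurj : ∀ m ∈ Min, ∃ i, msel i = m := by
    intro m hm
    exact ⟨Min.equivFin ⟨m, hm⟩, by rw [hmseldef]; simp⟩
  choose N hN1 hNper using fun i => hper (msel i) (hmselMin i)
  refine ⟨hinj, Min.card,
    fun i => ⨅ j ∈ Finset.range (N i), Ideal.comap (σ ^ j) (msel i),
    fun i => ⟨N i, hN1 i, msel i, hMinprime _ (hmselMin i), hNper i, rfl⟩, ?_⟩
  refine le_antisymm ?_ bot_le
  rw [← hMinbot]
  refine Finset.le_inf fun m hm => ?_
  obtain ⟨i, rfl⟩ := hmselsurj m hm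
  have h1 : (⨅ i, ⨅ j ∈ Finset.range (N i), Ideal.comap (σ ^ j) (msel i)) ≤
      ⨅ j ∈ Finset.range (N i), Ideal.comap (σ ^ j) (msel i) := iInf_le _ i
  have h2 : (⨅ j ∈ Finset.range (N i), Ideal.comap (σ ^ j) (msel i)) ≤
      Ideal.comap (σ ^ 0) (msel i) :=
    iInf₂_le 0 (Finset.mem_range.mpr (by have := hN1 i; omega))
  rw [comap_pow_zero_eq] at h2
  exact h1.trans h2
end

section
/- Let K be a φ-pseudo field and let R be a K-φ-algebra (a commutative K-algebra with a ring endomorphism φ_R satisfying φ_R(algebraMap K R a) = algebraMap K R (φ(a)) for all a ∈ K) which is φ_R-simple and finitely generated as a K-algebra. Then the subring R^{φ_R} = {r ∈ R | φ_R(r) = r} is a field, and every element of R^{φ_R} is algebraic over K^φ: for every r ∈ R^{φ_R} there exists a nonzero polynomial with coefficients in the image of K^φ = {a ∈ K | φ(a) = a} under algebraMap K R that vanishes at r. -/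
/-- A `φ`-pseudo field is a `φ`-simple Noetherian `φ`-ring in which every
non-zero-divisor is a unit. -/
def PseudoField (R : Type*) [CommRing R] (φ : R →+* R) : Prop :=
  DiffSimple φ ∧ IsNoetherianRing R ∧ ∀ x ∈ nonZeroDivisors R, IsUnit x

open Polynomial

section Basic
variable {S : Type*} [CommRing S]

theorem DiffSimple.zero_ne_one {f : S →+* S} (h : DiffSimple f) : (0 : S) ≠ 1 := by
  intro h01
  refine h.1 (eq_top_iff.2 fun x _ => ?_)
  rw [Ideal.mem_bot]
  calc x = x * 1 := (mul_one x).symm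
  _ = x * 0 := by rw [← h01]
  _ = 0 := mul_zero x

theorem DiffSimple.exists_inv {f : S →+* S} (h : DiffSimple f) {x : S} (hx : f x = x)
    (h0 : x ≠ 0) : ∃ y : S, f y = y ∧ x * y = 1 := by
  have hst : ∀ z ∈ Ideal.span {x}, f z ∈ Ideal.span {x} := by
    intro z hz
    rcases Ideal.mem_span_singleton'.1 hz with ⟨c, rfl⟩
    exact Ideal.mem_span_singleton'.2 ⟨f c, by rw [map_mul, hx]⟩
  rcases h.2 _ hst with hbot | htop
  · exact absurd (Ideal.span_singleton_eq_bot.1 hbot) h0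
  · have h1 : (1 : S) ∈ Ideal.span {x} := htop ▸ Submodule.mem_top
    rcases Ideal.mem_span_singleton'.1 h1 with ⟨z, hz⟩
    have hfz : f z * x = 1 := by
      have h2 := congrArg f hz
      rwa [map_mul, hx, map_one] at h2
    have hzz : f z = z := by
      calc f z = f z * (z * x) := by rw [hz, mul_one]
      _ = z * (f z * x) := by ring
      _ = z := by rw [hfz, mul_one]
    exact ⟨z, hzz, by rw [mul_comm]; exact hz⟩

theorem DiffSimple.isUnit {f : S →+* S} (h : DiffSimple f) {x : S} (hx : f x = x)
    (h0 : x ≠ 0) : IsUnit x :=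
  let ⟨y, _, hxy⟩ := h.exists_inv hx h0
  IsUnit.of_mul_eq_one y hxy

theorem constants_isField {f : S →+* S} (h : DiffSimple f) :
    IsField ↥(RingHom.eqLocus f (RingHom.id S)) := by
  refine ⟨⟨0, 1, fun e => h.zero_ne_one (congrArg Subtype.val e)⟩, mul_comm, ?_⟩
  rintro ⟨x, hx⟩ hx0
  have hxx : f x = x := hx
  have h0 : x ≠ 0 := fun e => hx0 (Subtype.ext e)
  rcases h.exists_inv hxx h0 with ⟨y, hfy, hxy⟩
  exact ⟨⟨y, show f y = RingHom.id S y from hfy⟩, Subtype.ext hxy⟩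

end Basic

section Phi
variable {K R : Type*} [CommRing K] [CommRing R] [Algebra K R]

theorem aeval_map_phi (φ : K →+* K) (φR : R →+* R)
    (hcomp : ∀ a : K, φR (algebraMap K R a) = algebraMap K R (φ a))
    {r : R} (hr : φR r = r) (p : K[X]) :
    φR (aeval r p) = aeval r (p.map φ) := by
  rw [aeval_def, aeval_def, eval₂_map, hom_eval₂, hr]
  congr 1
  ext a
  exact hcomp a

/-- The φ-trick: if some nonzero polynomial over `K` kills `r`, then some nonzero
polynomial with `φ`-fixed coefficients kills `r`. -/
theorem exists_fixed_poly (φ : K →+* K) (φR : R →+* R)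
    (hKs : DiffSimple φ)
    (hcomp : ∀ a : K, φR (algebraMap K R a) = algebraMap K R (φ a))
    {r : R} (hr : φR r = r)
    (hex : ∃ p : K[X], p ≠ 0 ∧ aeval r p = 0) :
    ∃ p : K[X], p ≠ 0 ∧ (∀ m, φ (p.coeff m) = p.coeff m) ∧ aeval r p = 0 := by
  classical
  have hPex : ∃ n, ∃ p : K[X], p ≠ 0 ∧ aeval r p = 0 ∧ p.natDegree = n := by
    obtain ⟨p, h1, h2⟩ := hex
    exact ⟨p.natDegree, p, h1, h2, rfl⟩
  set n₀ := Nat.find hPex with hn₀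
  obtain ⟨p₀, hp₀ne, hp₀ev, hp₀deg⟩ := Nat.find_spec hPex
  have hmin : ∀ p : K[X], p ≠ 0 → aeval r p = 0 → n₀ ≤ p.natDegree := fun p h1 h2 =>
    Nat.find_min' hPex ⟨p, h1, h2, rfl⟩
  let L : Ideal K :=
    { carrier := {a | ∃ p : K[X], aeval r p = 0 ∧ p.natDegree ≤ n₀ ∧ p.coeff n₀ = a}
      add_mem' := by
        rintro a b ⟨p, hp1, hp2, hp3⟩ ⟨q, hq1, hq2, hq3⟩
        exact ⟨p + q, by rw [map_add, hp1, hq1, add_zero],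
          le_trans (natDegree_add_le p q) (max_le hp2 hq2), by rw [coeff_add, hp3, hq3]⟩
      zero_mem' := ⟨0, by simp, by simp, by simp⟩
      smul_mem' := by
        rintro k a ⟨p, hp1, hp2, hp3⟩
        refine ⟨C k * p, by rw [map_mul, hp1, mul_zero],
          le_trans (natDegree_C_mul_le k p) hp2, ?_⟩
        rw [coeff_C_mul, hp3]
        rfl }
  have hLst : ∀ a ∈ L, φ a ∈ L := by
    rintro a ⟨p, hp1, hp2, hp3⟩
    exact ⟨p.map φ, by rw [← aeval_map_phi φ φR hcomp hr, hp1, map_zero],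
      le_trans natDegree_map_le hp2, by rw [coeff_map, hp3]⟩
  rcases hKs.2 L hLst with hbot | htop
  · exfalso
    have hmem : p₀.coeff n₀ ∈ L := ⟨p₀, hp₀ev, le_of_eq hp₀deg, rfl⟩
    rw [hbot, Ideal.mem_bot] at hmem
    refine hp₀ne (leadingCoeff_eq_zero.1 ?_)
    rwa [Polynomial.leadingCoeff, hp₀deg]
  · have h1L : (1 : K) ∈ L := htop ▸ Submodule.mem_top
    obtain ⟨p, hp1, hp2, hp3⟩ := h1L
    have hpne : p ≠ 0 := by
      intro e
      rw [e, coeff_zero] at hp3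
      exact hKs.zero_ne_one hp3
    have hdev : aeval r (p.map φ - p) = 0 := by
      rw [map_sub, ← aeval_map_phi φ φR hcomp hr, hp1, map_zero, sub_zero]
    have hcoeffhigh : ∀ m, n₀ ≤ m → (p.map φ - p).coeff m = 0 := by
      intro m hm
      rcases eq_or_lt_of_le hm with rfl | hlt
      · rw [coeff_sub, coeff_map, hp3, map_one, sub_self]
      · have hz : p.coeff m = 0 := coeff_eq_zero_of_natDegree_lt (lt_of_le_of_lt hp2 hlt)
        rw [coeff_sub, coeff_map, hz, map_zero, sub_self]
    have hd0 : p.map φ - p = 0 := by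
      by_contra hne
      have hle := hmin _ hne hdev
      have hz := hcoeffhigh _ hle
      exact hne (leadingCoeff_eq_zero.1 hz)
    refine ⟨p, hpne, fun m => ?_, hp1⟩
    have := congrArg (fun q : K[X] => q.coeff m) hd0
    simpa [coeff_map, sub_eq_zero] using this

end Phi

section Family

/-- Arbitrarily large families of pairwise coprime monic nonconstant polynomials. -/
theorem exists_coprime_monic_family (S : Type*) [CommRing S] [Nontrivial S] (n : ℕ) :
    ∃ t : Finset (Polynomial S), t.card = n ∧ (∀ q ∈ t, q.Monic ∧ q.natDegree ≠ 0) ∧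
      (↑t : Set (Polynomial S)).Pairwise IsCoprime := by
  classical
  induction n with
  | zero => exact ⟨∅, rfl, by simp, by simp⟩
  | succ n ih =>
    obtain ⟨t, hcard, hmon, hcop⟩ := ih
    have hprodmon : (∏ q ∈ t, q).Monic := monic_prod_of_monic _ _ fun q hq => (hmon q hq).1
    have h1 : (X * ∏ q ∈ t, q).Monic := monic_X.mul hprodmon
    set P : Polynomial S := X * ∏ q ∈ t, q + 1 with hP
    have hdegpos : 0 < (X * ∏ q ∈ t, q).degree := by
      rw [← natDegree_pos_iff_degree_pos, monic_X.natDegree_mul hprodmon, natDegree_X]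
      omega
    have hmonP : P.Monic := by
      refine h1.add_of_left ?_
      rw [degree_one]
      exact hdegpos
    have hPdeg : P.natDegree ≠ 0 := by
      intro h0
      have hp1 : P = 1 := (hmonP.natDegree_eq_zero).1 h0
      have hz : X * ∏ q ∈ t, q = 0 := by
        have h2 : X * ∏ q ∈ t, q = P - 1 := by rw [hP]; ring
        rw [hp1, sub_self] at h2
        exact h2
      exact h1.ne_zero hz
    have hcoprime : ∀ q ∈ t, IsCoprime q P := by
      intro q hq
      refine ⟨-(X * ∏ p ∈ t.erase q, p), 1, ?_⟩
      have h2 : q * ∏ p ∈ t.erase q, p = ∏ p ∈ t, p := Finset.mul_prod_erase t (fun p => p) hq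
      rw [one_mul, hP, ← h2]
      ring
    have hPnotmem : P ∉ t := by
      intro hmem
      have hd1 : P ∣ X * ∏ q ∈ t, q := Dvd.dvd.mul_left (Finset.dvd_prod_of_mem _ hmem) X
      have hd2 : P ∣ 1 := by
        have : (1 : Polynomial S) = P - X * ∏ q ∈ t, q := by rw [hP]; ring
        rw [this]
        exact dvd_sub dvd_rfl hd1
      obtain ⟨v, hv⟩ := hd2
      have hvne : v ≠ 0 := by
        intro h0
        rw [h0, mul_zero] at hv
        exact one_ne_zero hv
      have : (0 : ℕ) = P.natDegree + v.natDegree := by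
        rw [← natDegree_one (R := S), hv, hmonP.natDegree_mul' hvne]
      omega
    refine ⟨insert P t, by rw [Finset.card_insert_of_notMem hPnotmem, hcard], ?_, ?_⟩
    · intro q hq
      rcases Finset.mem_insert.1 hq with rfl | hq
      exacts [⟨hmonP, hPdeg⟩, hmon q hq]
    · rw [Finset.coe_insert]
      exact hcop.insert fun q hq _ => ⟨(hcoprime q hq).symm, hcoprime q hq⟩

end Family

section Kstruct
variable {K : Type*} [CommRing K] {φ : K →+* K}

theorem PseudoField.nilradical_eq_bot (h : PseudoField K φ) : nilradical K = ⊥ := by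
  rcases h.1.2 (nilradical K) (fun x hx => by
    rw [mem_nilradical] at hx ⊢
    exact hx.map φ) with h1 | h1
  · exact h1
  · exfalso
    have h2 : (1 : K) ∈ nilradical K := h1 ▸ Submodule.mem_top
    rw [mem_nilradical] at h2
    obtain ⟨n, hn⟩ := h2
    rw [one_pow] at hn
    exact h.1.zero_ne_one hn.symm

theorem PseudoField.maximal_mem_minimalPrimes (h : PseudoField K φ) {m : Ideal K}
    (hm : m.IsMaximal) : m ∈ minimalPrimes K := by
  classical
  haveI : IsNoetherianRing K := h.2.1
  have hfin : (minimalPrimes K).Finite := minimalPrimes.finite_of_isNoetherianRing K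
  have hsinf : sInf (minimalPrimes K) = ⊥ := by
    show sInf ((⊥ : Ideal K).minimalPrimes) = ⊥
    rw [Ideal.sInf_minimalPrimes]
    exact h.nilradical_eq_bot
  have hsub : (m : Set K) ⊆ ⋃ p ∈ hfin.toFinset, (p : Set K) := by
    intro x hx
    have hxnu : ¬ IsUnit x := fun hu => hm.ne_top (Ideal.eq_top_of_isUnit_mem _ hx hu)
    have hxzd : ∃ z, z * x = 0 ∧ z ≠ 0 := by
      by_contra hc
      push_neg at hc
      exact hxnu (h.2.2 x (mem_nonZeroDivisors_iff_right.2 fun z hz => hc z hz))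
    obtain ⟨z, hzx, hz0⟩ := hxzd
    have hzn : z ∉ sInf (minimalPrimes K) := by
      rw [hsinf, Ideal.mem_bot]
      exact hz0
    rw [Submodule.mem_sInf] at hzn
    push_neg at hzn
    obtain ⟨p, hp, hzp⟩ := hzn
    have hp' : p ∈ minimalPrimes K := hp
    have hpp : Ideal.IsPrime p := hp'.1.1
    have hxp : x ∈ p := by
      rcases hpp.mem_or_mem (show z * x ∈ p by rw [hzx]; exact p.zero_mem) with h' | h'
      · exact absurd h' hzp
      · exact h'
    exact Set.mem_biUnion (hfin.mem_toFinset.2 hp') hxp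
  have hprime : ∀ p ∈ hfin.toFinset, p ≠ m → p ≠ m → (id p : Ideal K).IsPrime := by
    intro p hp _ _
    exact (hfin.mem_toFinset.1 hp).1.1
  obtain ⟨p, hps, hmp⟩ := (Ideal.subset_union_prime m m hprime).1 hsub
  have hpmem := hfin.mem_toFinset.1 hps
  have : m = p := hm.eq_of_le hpmem.1.1.ne_top hmp
  rw [this]
  exact hpmem

theorem PseudoField.isMaximal_of_isPrime (h : PseudoField K φ) {℘ : Ideal K}
    (hp : ℘.IsPrime) : ℘.IsMaximal := by
  obtain ⟨m, hm, hle⟩ := Ideal.exists_le_maximal ℘ hp.ne_top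
  have hmin := h.maximal_mem_minimalPrimes hm
  have : m ≤ ℘ := hmin.2 ⟨hp, bot_le⟩ hle
  rwa [le_antisymm hle this]

theorem PseudoField.primes_finite (h : PseudoField K φ) :
    {I : Ideal K | I.IsPrime}.Finite := by
  haveI : IsNoetherianRing K := h.2.1
  refine (minimalPrimes.finite_of_isNoetherianRing K).subset ?_
  intro ℘ hp
  exact h.maximal_mem_minimalPrimes (h.isMaximal_of_isPrime hp)

theorem PseudoField.exists_mask (h : PseudoField K φ) {℘ : Ideal K} (hp : ℘.IsPrime) :
    ∃ e : K, (1 - e) ∈ ℘ ∧ ∀ ρ : Ideal K, ρ.IsPrime → ρ ≠ ℘ → e ∈ ρ := by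
  classical
  have hfin := h.primes_finite
  set s := hfin.toFinset.erase ℘ with hs
  have hprodle : ¬ ((s.prod id : Ideal K) ≤ ℘) := by
    intro hle
    obtain ⟨q, hqs, hq℘⟩ := hp.prod_le.1 hle
    have hq : (q : Ideal K).IsPrime := hfin.mem_toFinset.1 (Finset.mem_of_mem_erase hqs)
    have : q = ℘ := (h.isMaximal_of_isPrime hq).eq_of_le hp.ne_top hq℘
    exact Finset.ne_of_mem_erase hqs this
  have hsup : ℘ ⊔ s.prod id = ⊤ := by
    refine (h.isMaximal_of_isPrime hp).1.2 _ (lt_of_le_of_ne le_sup_left ?_)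
    intro heq
    refine hprodle ?_
    rw [heq]
    exact le_sup_right
  have h1 : (1 : K) ∈ ℘ ⊔ s.prod id := hsup ▸ Submodule.mem_top
  obtain ⟨x, hx℘, e, he, hxe⟩ := Submodule.mem_sup.1 h1
  refine ⟨e, ?_, ?_⟩
  · have : (1 : K) - e = x := by rw [← hxe]; ring
    rw [this]
    exact hx℘
  · intro ρ hρ hne
    have hρs : ρ ∈ s := by
      rw [hs]
      exact Finset.mem_erase.2 ⟨hne, hfin.mem_toFinset.2 hρ⟩
    have hle : s.prod id ≤ ρ := le_trans Ideal.prod_le_inf (Finset.inf_le hρs)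
    exact hle he

end Kstruct

section Core
variable {K' E : Type*} [Field K'] [Field E]

theorem nzd_of_all_primes {K : Type*} [CommRing K] (hnil : nilradical K = ⊥)
    {t : Polynomial K} (ht : ∀ ρ : Ideal K, ρ.IsPrime → t.map (Ideal.Quotient.mk ρ) ≠ 0) :
    t ∈ nonZeroDivisors (Polynomial K) := by
  rw [mem_nonZeroDivisors_iff_right]
  intro g hg
  ext m
  rw [coeff_zero]
  have hmem : g.coeff m ∈ nilradical K := by
    rw [nilradical_eq_sInf]
    refine Ideal.mem_sInf.2 ?_
    intro ρ hρ
    haveI : Ideal.IsPrime ρ := hρ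
    have h2 : g.map (Ideal.Quotient.mk ρ) * t.map (Ideal.Quotient.mk ρ) = 0 := by
      rw [← Polynomial.map_mul, hg, Polynomial.map_zero]
    rcases mul_eq_zero.1 h2 with h3 | h3
    · have h4 := congrArg (fun q : Polynomial (K ⧸ ρ) => q.coeff m) h3
      simpa [coeff_map, Ideal.Quotient.eq_zero_iff_mem] using h4
    · exact absurd h3 (ht ρ hρ)
  rwa [hnil, Ideal.mem_bot] at hmem

/-- Core commutative-algebra step.  If `E` is a field which is "generated" by finitely many
elements `gens` together with fractions of the image of an injective map `ψ` from a polynomial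
ring over a field, then there is a single nonzero polynomial `τ` such that any `q'` whose
`ψ`-image is invertible inside the subring generated by the `ψ`-constants and `gens`
divides a power of `τ`. -/
theorem core_dvd (ψ : Polynomial K' →+* E) (hψinj : Function.Injective ψ)
    (gens : Finset E)
    (hfrac : ∀ x : E, ∃ b : Polynomial K', b ≠ 0 ∧
        x * ψ b ∈ Subring.closure (Set.range (fun a : K' => ψ (C a)) ∪ ↑gens)) :
    ∃ τ : Polynomial K', τ ≠ 0 ∧ ∀ q' : Polynomial K',
      (∃ u ∈ Subring.closure (Set.range (fun a : K' => ψ (C a)) ∪ ↑gens), ψ q' * u = 1) →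
      ∃ (N : ℕ) (a : Polynomial K'), τ ^ N = q' * a := by
  classical
  set Im : Subring E := Subring.closure (Set.range (fun a : K' => ψ (C a)) ∪ ↑gens) with hIm
  have hψ0 : ∀ b : Polynomial K', b ≠ 0 → ψ b ≠ 0 := by
    intro b hb h0
    exact hb (hψinj (by rw [h0, map_zero]))
  -- the subfield of fractions of the image of ψ
  let Q₀ : Subfield E :=
    { carrier := {x : E | ∃ a b : Polynomial K', b ≠ 0 ∧ x * ψ b = ψ a}
      one_mem' := ⟨1, 1, one_ne_zero, by rw [one_mul]⟩
      mul_mem' := by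
        rintro x y ⟨a, b, hb, hx⟩ ⟨c, d, hd, hy⟩
        refine ⟨a * c, b * d, mul_ne_zero hb hd, ?_⟩
        rw [map_mul, map_mul]
        calc x * y * (ψ b * ψ d) = (x * ψ b) * (y * ψ d) := by ring
        _ = ψ a * ψ c := by rw [hx, hy]
      zero_mem' := ⟨0, 1, one_ne_zero, by rw [zero_mul, map_zero]⟩
      add_mem' := by
        rintro x y ⟨a, b, hb, hx⟩ ⟨c, d, hd, hy⟩
        refine ⟨a * d + c * b, b * d, mul_ne_zero hb hd, ?_⟩
        rw [map_add, map_mul, map_mul, map_mul]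
        calc (x + y) * (ψ b * ψ d) = (x * ψ b) * ψ d + (y * ψ d) * ψ b := by ring
        _ = ψ a * ψ d + ψ c * ψ b := by rw [hx, hy]
      neg_mem' := by
        rintro x ⟨a, b, hb, hx⟩
        exact ⟨-a, b, hb, by rw [map_neg, neg_mul, hx]⟩
      inv_mem' := by
        rintro x ⟨a, b, hb, hx⟩
        by_cases hx0 : x = 0
        · exact ⟨0, 1, one_ne_zero, by rw [hx0, inv_zero, zero_mul, map_zero]⟩
        · have ha : a ≠ 0 := by
            intro h0
            rw [h0, map_zero] at hx
            exact hψ0 b hb ((mul_eq_zero.1 hx).resolve_left hx0)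
          refine ⟨b, a, ha, ?_⟩
          rw [← hx]
          field_simp
      }
  have hψQ : ∀ p : Polynomial K', ψ p ∈ Q₀ := fun p =>
    ⟨p, 1, one_ne_zero, by rw [map_one, mul_one]⟩
  have halgQ : ∀ x : ↥Q₀, algebraMap ↥Q₀ E x = ↑x := fun _ => rfl
  -- E is finitely generated over Q₀
  have hadj : Algebra.adjoin ↥Q₀ (↑gens : Set E) = ⊤ := by
    rw [eq_top_iff]
    rintro x -
    obtain ⟨b, hb, hxb⟩ := hfrac x
    have hImle : Im ≤ (Algebra.adjoin ↥Q₀ (↑gens : Set E)).toSubring := by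
      refine Subring.closure_le.2 ?_
      rintro y (⟨a, rfl⟩ | hy)
      · have hmem : (⟨ψ (C a), hψQ _⟩ : ↥Q₀) = ⟨ψ (C a), hψQ _⟩ := rfl
        exact Subalgebra.algebraMap_mem (Algebra.adjoin ↥Q₀ (↑gens : Set E))
          (⟨ψ (C a), hψQ _⟩ : ↥Q₀)
      · exact Algebra.subset_adjoin hy
    have hxQ : x = (x * ψ b) * (ψ b)⁻¹ := by
      rw [mul_assoc, mul_inv_cancel₀ (hψ0 b hb), mul_one]
    rw [hxQ]
    refine mul_mem (hImle hxb) ?_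
    have hinv : (ψ b)⁻¹ ∈ Q₀ := Q₀.inv_mem (hψQ b)
    exact Subalgebra.algebraMap_mem (Algebra.adjoin ↥Q₀ (↑gens : Set E)) (⟨(ψ b)⁻¹, hinv⟩ : ↥Q₀)
  haveI hft : Algebra.FiniteType ↥Q₀ E := ⟨⟨gens, hadj⟩⟩
  -- Zariski's lemma: E is integral over Q₀
  have hint : ∀ x : E, IsIntegral ↥Q₀ x := by
    obtain ⟨ι, hfin, f, hfsurj⟩ := Algebra.FiniteType.iff_quotient_mvPolynomial'.1 hft
    haveI : Fintype ι := hfin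
    have hino := MvPolynomial.comp_C_integral_of_surjective_of_isJacobsonRing f.toRingHom hfsurj
    intro x
    have h1 := hino x
    have h2 : f.toRingHom.comp MvPolynomial.C = algebraMap ↥Q₀ E := by
      ext a
      show f.toRingHom (MvPolynomial.C a) = _
      rw [← MvPolynomial.algebraMap_eq]
      exact f.commutes a
    rw [h2] at h1
    exact h1
  -- choose monic polynomials and common denominators
  have hgen_int : ∀ g : E, ∃ Pg : Polynomial ↥Q₀, Pg.Monic ∧
      eval₂ (algebraMap ↥Q₀ E) g Pg = 0 := fun g => hint g
  choose Pg hPgmon hPgev using hgen_int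
  have hden : ∀ P : Polynomial ↥Q₀, ∃ d : Polynomial K', d ≠ 0 ∧
      ∀ k : ℕ, ∃ a : Polynomial K', (↑(P.coeff k) : E) * ψ d = ψ a := by
    intro P
    have hstep : ∀ n : ℕ, ∃ d : Polynomial K', d ≠ 0 ∧
        ∀ k ≤ n, ∃ a : Polynomial K', (↑(P.coeff k) : E) * ψ d = ψ a := by
      intro n
      induction n with
      | zero =>
        obtain ⟨a, b, hb, hab⟩ := (P.coeff 0).2
        exact ⟨b, hb, fun k hk => by rw [Nat.le_zero.1 hk]; exact ⟨a, hab⟩⟩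
      | succ n ih =>
        obtain ⟨d, hd, hall⟩ := ih
        obtain ⟨a, b, hb, hab⟩ := (P.coeff (n + 1)).2
        refine ⟨d * b, mul_ne_zero hd hb, fun k hk => ?_⟩
        rcases Nat.le_succ_iff.1 hk with hk' | rfl
        · obtain ⟨ak, hak⟩ := hall k hk'
          refine ⟨ak * b, ?_⟩
          rw [map_mul, map_mul, ← mul_assoc, hak]
        · refine ⟨a * d, ?_⟩
          rw [map_mul, map_mul]
          calc (↑(P.coeff (n + 1)) : E) * (ψ d * ψ b)
              = (↑(P.coeff (n + 1)) : E) * ψ b * ψ d := by ring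
          _ = ψ a * ψ d := by rw [hab]
    obtain ⟨d, hd, hall⟩ := hstep P.natDegree
    refine ⟨d, hd, fun k => ?_⟩
    by_cases hk : k ≤ P.natDegree
    · exact hall k hk
    · refine ⟨0, ?_⟩
      rw [P.coeff_eq_zero_of_natDegree_lt (lt_of_not_ge hk), map_zero, ZeroMemClass.coe_zero,
        zero_mul]
  choose dg hdgne hdgall using fun g : E => hden (Pg g)
  set τ : Polynomial K' := ∏ g ∈ gens, dg g with hτ
  have hτne : τ ≠ 0 := Finset.prod_ne_zero_iff.2 fun g _ => hdgne g
  -- the subring A* of elements with τ-power denominators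
  let Astar : Subring E :=
    { carrier := {x : E | ∃ (n : ℕ) (a : Polynomial K'), x * ψ (τ ^ n) = ψ a}
      one_mem' := ⟨0, 1, by rw [pow_zero, map_one, one_mul]⟩
      mul_mem' := by
        rintro x y ⟨n, a, ha⟩ ⟨m, b, hb⟩
        refine ⟨n + m, a * b, ?_⟩
        rw [pow_add, map_mul, map_mul]
        calc x * y * (ψ (τ ^ n) * ψ (τ ^ m)) = (x * ψ (τ ^ n)) * (y * ψ (τ ^ m)) := by ring
        _ = ψ a * ψ b := by rw [ha, hb]
      zero_mem' := ⟨0, 0, by rw [map_zero, zero_mul]⟩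
      add_mem' := by
        rintro x y ⟨n, a, ha⟩ ⟨m, b, hb⟩
        refine ⟨n + m, a * τ ^ m + b * τ ^ n, ?_⟩
        rw [pow_add, map_mul, map_add, map_mul, map_mul]
        calc (x + y) * (ψ (τ ^ n) * ψ (τ ^ m))
            = (x * ψ (τ ^ n)) * ψ (τ ^ m) + (y * ψ (τ ^ m)) * ψ (τ ^ n) := by ring
        _ = ψ a * ψ (τ ^ m) + ψ b * ψ (τ ^ n) := by rw [ha, hb]
      neg_mem' := by
        rintro x ⟨n, a, ha⟩
        exact ⟨n, -a, by rw [map_neg, neg_mul, ha]⟩ }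
  have hψA : ∀ p : Polynomial K', ψ p ∈ Astar := fun p =>
    ⟨0, p, by rw [pow_zero, map_one, mul_one]⟩
  have halgA : algebraMap ↥Astar E = Astar.subtype := rfl
  -- generators are integral over A*
  have hgensInt : ∀ g ∈ gens, IsIntegral ↥Astar g := by
    intro g hg
    set PE : Polynomial E := (Pg g).map (algebraMap ↥Q₀ E) with hPE
    have hPEmon : PE.Monic := (hPgmon g).map _
    have hcoeffA : ∀ k, PE.coeff k ∈ Astar := by
      intro k
      rw [hPE, coeff_map, halgQ]
      obtain ⟨ak, hak⟩ := hdgall g k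
      refine ⟨1, ak * ∏ g' ∈ gens.erase g, dg g', ?_⟩
      rw [pow_one]
      have hτeq : τ = dg g * ∏ g' ∈ gens.erase g, dg g' := by
        rw [hτ, Finset.mul_prod_erase gens dg hg]
      rw [hτeq, map_mul, map_mul, ← mul_assoc, hak]
    have hco : (↑PE.coeffs : Set E) ⊆ ↑Astar := by
      intro y hy
      obtain ⟨k, _, rfl⟩ := Polynomial.mem_coeffs_iff.1 hy
      exact hcoeffA k
    refine ⟨PE.toSubring Astar hco, (monic_toSubring _ _ _).2 hPEmon, ?_⟩
    rw [halgA, eval₂_eq_eval_map, map_toSubring]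
    rw [hPE, eval_map]
    exact hPgev g
  -- the image subring is contained in the integral closure of A*
  have hImInt : Im ≤ (integralClosure ↥Astar E).toSubring := by
    refine Subring.closure_le.2 ?_
    rintro y (⟨a, rfl⟩ | hy)
    · show IsIntegral ↥Astar (ψ (C a))
      have : algebraMap ↥Astar E (⟨ψ (C a), hψA _⟩ : ↥Astar) = ψ (C a) := rfl
      rw [← this]
      exact isIntegral_algebraMap
    · exact hgensInt y hy
  -- main conclusion
  refine ⟨τ, hτne, ?_⟩
  rintro q' ⟨u, huIm, hqu⟩
  have hUint : IsIntegral ↥Astar u := hImInt huIm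
  obtain ⟨Pu, hPumon, hPuev⟩ := hUint
  set n := Pu.natDegree with hn
  have hn1 : n ≠ 0 := by
    intro h0
    have h1 : Pu = 1 := hPumon.natDegree_eq_zero.1 h0
    rw [h1, eval₂_one] at hPuev
    exact one_ne_zero hPuev
  have huv : u * ψ q' = 1 := by rw [mul_comm]; exact hqu
  have hupow : ∀ i : ℕ, u ^ i * ψ q' ^ i = 1 := fun i => by rw [← mul_pow, huv, one_pow]
  have h0 : u ^ n = - ∑ i ∈ Finset.range n, Astar.subtype (Pu.coeff i) * u ^ i := by
    have hev := hPuev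
    rw [halgA, eval₂_eq_sum_range, Finset.sum_range_succ] at hev
    have hlast : Astar.subtype (Pu.coeff n) = 1 := by
      have : Pu.coeff n = 1 := hPumon.coeff_natDegree
      rw [this]
      rfl
    rw [hlast, one_mul] at hev
    exact eq_neg_of_add_eq_zero_right hev
  have hkey : u = - ∑ i ∈ Finset.range n, Astar.subtype (Pu.coeff i) * ψ q' ^ (n - 1 - i) := by
    have h2 : u = u ^ n * ψ q' ^ (n - 1) := by
      have h3 : u ^ n = u ^ (n - 1) * u := by
        rw [← pow_succ]
        congr 1
        omega
      rw [h3]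
      symm
      calc u ^ (n - 1) * u * ψ q' ^ (n - 1) = u * (u ^ (n - 1) * ψ q' ^ (n - 1)) := by ring
      _ = u := by rw [hupow, mul_one]
    rw [h2, h0, neg_mul, Finset.sum_mul]
    congr 1
    refine Finset.sum_congr rfl fun i hi => ?_
    have hin : i < n := Finset.mem_range.1 hi
    have hsplit : ψ q' ^ (n - 1) = ψ q' ^ i * ψ q' ^ (n - 1 - i) := by
      rw [← pow_add]
      congr 1
      omega
    rw [hsplit]
    calc Astar.subtype (Pu.coeff i) * u ^ i * (ψ q' ^ i * ψ q' ^ (n - 1 - i))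
        = Astar.subtype (Pu.coeff i) * (u ^ i * ψ q' ^ i) * ψ q' ^ (n - 1 - i) := by ring
    _ = Astar.subtype (Pu.coeff i) * ψ q' ^ (n - 1 - i) := by rw [hupow, mul_one]
  have husum : u ∈ Astar := by
    rw [hkey]
    refine Astar.neg_mem (Subring.sum_mem _ fun i _ => Astar.mul_mem ?_ ?_)
    · exact (Pu.coeff i).2
    · exact Subring.pow_mem _ (hψA q') _
  obtain ⟨N, a, hNa⟩ := husum
  refine ⟨N, a, hψinj ?_⟩
  rw [map_mul]
  calc ψ (τ ^ N) = (ψ q' * u) * ψ (τ ^ N) := by rw [hqu, one_mul]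
  _ = ψ q' * (u * ψ (τ ^ N)) := by ring
  _ = ψ q' * ψ a := by rw [hNa]

end Core

set_option maxHeartbeats 2000000 in
theorem hard_exists
    {K R : Type*} [CommRing K] [CommRing R] [Algebra K R]
    (φ : K →+* K) (φR : R →+* R)
    (hPF : PseudoField K φ)
    (hcomp : ∀ a : K, φR (algebraMap K R a) = algebraMap K R (φ a))
    (hsimple : DiffSimple φR)
    (hfg : Algebra.FiniteType K R)
    (r : R) (hr : φR r = r) :
    ∃ p : Polynomial K, p ≠ 0 ∧ aeval r p = 0 := by
  classical
  by_contra hcon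
  push_neg at hcon
  haveI : Nontrivial R := ⟨0, 1, hsimple.zero_ne_one⟩
  haveI : Nontrivial K := ⟨0, 1, hPF.1.zero_ne_one⟩
  set F₀ : Subring K := RingHom.eqLocus φ (RingHom.id K) with hF₀
  haveI : Nontrivial ↥F₀ := ⟨0, 1, fun h => hPF.1.zero_ne_one (congrArg Subtype.val h)⟩
  -- evaluation and units
  have hunit : ∀ q : Polynomial K, q ≠ 0 → (∀ m, φ (q.coeff m) = q.coeff m) →
      ∃ w : R, aeval r q * w = 1 := by
    intro q hq hqc
    have hmapq : q.map φ = q := Polynomial.ext fun m => by rw [coeff_map]; exact hqc m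
    have hfix : φR (aeval r q) = aeval r q := by
      rw [aeval_map_phi φ φR hcomp hr q, hmapq]
    obtain ⟨w, _, hw⟩ := hsimple.exists_inv hfix (hcon q hq)
    exact ⟨w, hw⟩
  -- localization at images of non-zero-divisor polynomials
  set evr : Polynomial K →+* R := (aeval r : Polynomial K →ₐ[K] R).toRingHom with hevr
  set M : Submonoid R := Submonoid.map evr.toMonoidHom (nonZeroDivisors (Polynomial K)) with hM
  have hM0 : ∀ m ∈ M, m ≠ (0 : R) := by
    rintro m hm
    obtain ⟨t, htn, hte⟩ := Submonoid.mem_map.1 hm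
    have htne : t ≠ 0 := nonZeroDivisors.ne_zero htn
    rw [← hte]
    exact hcon t htne
  haveI : Nontrivial (Localization M) := by
    refine ⟨0, 1, fun h01 => ?_⟩
    have h1 : algebraMap R (Localization M) 1 = 0 := by rw [map_one, ← h01]
    obtain ⟨m, hm⟩ := (IsLocalization.map_eq_zero_iff M (Localization M) 1).1 h1
    rw [mul_one] at hm
    exact hM0 ↑m m.2 hm
  obtain ⟨MB, hMBmax⟩ := Ideal.exists_maximal (Localization M)
  haveI := hMBmax
  letI : Field (Localization M ⧸ MB) := Ideal.Quotient.field MB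
  set μ : R →+* Localization M ⧸ MB :=
    (Ideal.Quotient.mk MB).comp (algebraMap R (Localization M)) with hμ
  have hμM : ∀ m ∈ M, μ m ≠ 0 := by
    intro m hm h0
    have hu : IsUnit (algebraMap R (Localization M) m) :=
      IsLocalization.map_units (Localization M) ⟨m, hm⟩
    have : algebraMap R (Localization M) m ∈ MB := Ideal.Quotient.eq_zero_iff_mem.1 h0
    exact hMBmax.ne_top (Ideal.eq_top_of_isUnit_mem _ this hu)
  set ρK : K →+* Localization M ⧸ MB := μ.comp (algebraMap K R) with hρK
  set ℘ : Ideal K := RingHom.ker ρK with h℘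
  haveI h℘p : ℘.IsPrime := RingHom.ker_isPrime ρK
  haveI h℘m : ℘.IsMaximal := hPF.isMaximal_of_isPrime h℘p
  letI : Field (K ⧸ ℘) := Ideal.Quotient.field ℘
  obtain ⟨e, he1, he2⟩ := hPF.exists_mask h℘p
  set ι : K ⧸ ℘ →+* Localization M ⧸ MB :=
    Ideal.Quotient.lift ℘ ρK (fun a ha => by rwa [RingHom.mem_ker] at ha) with hι
  set ψ : Polynomial (K ⧸ ℘) →+* Localization M ⧸ MB := eval₂RingHom ι (μ r) with hψ
  have hψmap : ∀ p : Polynomial K, ψ (p.map (Ideal.Quotient.mk ℘)) = μ (aeval r p) := by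
    intro p
    show eval₂ ι (μ r) (p.map (Ideal.Quotient.mk ℘)) = μ (aeval r p)
    rw [eval₂_map, aeval_def, hom_eval₂]
    have hcomp' : ι.comp (Ideal.Quotient.mk ℘) = μ.comp (algebraMap K R) := by
      ext a
      show ι (Ideal.Quotient.mk ℘ a) = μ (algebraMap K R a)
      rw [hι, Ideal.Quotient.lift_mk]
      rfl
    rw [hcomp']
  -- the masking argument
  have hmask : ∀ p : Polynomial K, p.map (Ideal.Quotient.mk ℘) ≠ 0 → μ (aeval r p) ≠ 0 := by
    intro p hp
    set t : Polynomial K := C e * p + C (1 - e) with ht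
    have h1e0 : Ideal.Quotient.mk ℘ (1 - e) = 0 := Ideal.Quotient.eq_zero_iff_mem.2 he1
    have hemk : Ideal.Quotient.mk ℘ e = 1 := by
      have := h1e0
      rw [map_sub, map_one, sub_eq_zero] at this
      exact this.symm
    have htmap : ∀ ρ' : Ideal K, ρ'.IsPrime → t.map (Ideal.Quotient.mk ρ') ≠ 0 := by
      intro ρ' hρ'
      by_cases hEq : ρ' = ℘
      · subst hEq
        rw [ht, Polynomial.map_add, Polynomial.map_mul, map_C, map_C, hemk, h1e0, C_1, C_0,
          one_mul, add_zero]
        exact hp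
      · have he0 : Ideal.Quotient.mk ρ' e = 0 :=
          Ideal.Quotient.eq_zero_iff_mem.2 (he2 ρ' hρ' hEq)
        have h1e : Ideal.Quotient.mk ρ' (1 - e) = 1 := by rw [map_sub, map_one, he0, sub_zero]
        rw [ht, Polynomial.map_add, Polynomial.map_mul, map_C, map_C, he0, h1e, C_0, zero_mul,
          zero_add, C_1]
        exact one_ne_zero
    have htnzd : t ∈ nonZeroDivisors (Polynomial K) :=
      nzd_of_all_primes hPF.nilradical_eq_bot htmap
    have htM : aeval r t ∈ M := Submonoid.mem_map.2 ⟨t, htnzd, rfl⟩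
    have h1 : μ (aeval r t) ≠ 0 := hμM _ htM
    have h2 : μ (aeval r t) = μ (aeval r p) := by
      have h3 : aeval r t = algebraMap K R e * aeval r p + algebraMap K R (1 - e) := by
        rw [ht, map_add, map_mul, aeval_C, aeval_C]
      rw [h3, map_add, map_mul]
      have he0μ : μ (algebraMap K R (1 - e)) = 0 := by
        show ρK (1 - e) = 0
        rw [← RingHom.mem_ker]
        exact he1
      have heoneμ : μ (algebraMap K R e) = 1 := by
        show ρK e = 1
        have h4 : ρK (1 - e) = 0 := by rw [← RingHom.mem_ker]; exact he1
        rw [map_sub, map_one, sub_eq_zero] at h4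
        exact h4.symm
      rw [he0μ, heoneμ, one_mul, add_zero]
    rw [h2] at h1
    exact h1
  have hψker : ∀ pb : Polynomial (K ⧸ ℘), ψ pb = 0 → pb = 0 := by
    intro pb hpb
    by_contra hne
    obtain ⟨p, rfl⟩ := Polynomial.map_surjective _ Ideal.Quotient.mk_surjective pb
    exact hmask p hne (by rw [← hψmap p]; exact hpb)
  have hψinj : Function.Injective ψ := by
    intro p1 p2 h12
    have : ψ (p1 - p2) = 0 := by rw [map_sub, h12, sub_self]
    have := hψker _ this
    exact sub_eq_zero.1 this
  -- generators
  obtain ⟨s, hs⟩ := hfg.out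
  set gens : Finset (Localization M ⧸ MB) := s.image μ with hgens
  have himg : ∀ x : R,
      μ x ∈ Subring.closure (Set.range (fun a : K ⧸ ℘ => ψ (C a)) ∪ ↑gens) := by
    intro x
    have hx : x ∈ Algebra.adjoin K (↑s : Set R) := by rw [hs]; exact Algebra.mem_top
    induction hx using Algebra.adjoin_induction with
    | mem y hy =>
      exact Subring.subset_closure (Or.inr (Finset.mem_coe.2 (Finset.mem_image_of_mem μ hy)))
    | algebraMap k =>
      have hck : μ (algebraMap K R k) = ψ (C (Ideal.Quotient.mk ℘ k)) := by
        rw [show (C (Ideal.Quotient.mk ℘ k) : Polynomial (K ⧸ ℘))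
            = (C k).map (Ideal.Quotient.mk ℘) from (map_C _).symm, hψmap, aeval_C]
      rw [hck]
      exact Subring.subset_closure (Or.inl ⟨_, rfl⟩)
    | add x y hxm hym hx' hy' =>
      rw [map_add]; exact Subring.add_mem _ hx' hy'
    | mul x y hxm hym hx' hy' =>
      rw [map_mul]; exact Subring.mul_mem _ hx' hy'
  -- the fraction property
  have hfrac : ∀ x : Localization M ⧸ MB, ∃ b : Polynomial (K ⧸ ℘), b ≠ 0 ∧
      x * ψ b ∈ Subring.closure (Set.range (fun a : K ⧸ ℘ => ψ (C a)) ∪ ↑gens) := by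
    intro x
    obtain ⟨bx, rfl⟩ := Ideal.Quotient.mk_surjective x
    obtain ⟨⟨rr, m⟩, hrm⟩ := IsLocalization.surj M bx
    obtain ⟨t, htn, hte⟩ := Submonoid.mem_map.1 m.2
    set b : Polynomial (K ⧸ ℘) := t.map (Ideal.Quotient.mk ℘) with hb
    have hψb : ψ b = μ ↑m := by
      rw [hb, hψmap, show (aeval r) t = (↑m : R) from hte]
    have hbne : b ≠ 0 := by
      intro h0
      have hz : ψ b = 0 := by rw [h0, map_zero]
      rw [hψb] at hz
      exact hμM ↑m m.2 hz
    refine ⟨b, hbne, ?_⟩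
    have hx : (Ideal.Quotient.mk MB bx) * ψ b = μ rr := by
      rw [hψb, hμ]
      show Ideal.Quotient.mk MB bx * Ideal.Quotient.mk MB (algebraMap R (Localization M) ↑m)
          = Ideal.Quotient.mk MB (algebraMap R (Localization M) rr)
      rw [← map_mul, hrm]
    rw [hx]
    exact himg rr
  obtain ⟨τ, hτne, hτdvd⟩ := core_dvd ψ hψinj gens hfrac
  -- the coprime family
  obtain ⟨fam, hfamcard, hfammon, hfamcop⟩ := exists_coprime_monic_family ↥F₀ (τ.natDegree + 1)
  set θc : ↥F₀ →+* K ⧸ ℘ := (Ideal.Quotient.mk ℘).comp F₀.subtype with hθc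
  have hθcinj : Function.Injective θc := by
    intro c1 c2 hcc
    by_contra hcne
    have hsub : θc (c1 - c2) = 0 := by rw [map_sub, hcc, sub_self]
    have hcfix : φ ↑(c1 - c2) = ↑(c1 - c2) := (c1 - c2).2
    have hc0 : ((c1 - c2 : ↥F₀) : K) ≠ 0 := by
      intro h0
      exact hcne (by
        have : c1 - c2 = 0 := Subtype.ext h0
        have := sub_eq_zero.1 this
        exact this)
    have hcu : IsUnit ((c1 - c2 : ↥F₀) : K) := hPF.1.isUnit hcfix hc0
    have hcmem : ((c1 - c2 : ↥F₀) : K) ∈ ℘ := Ideal.Quotient.eq_zero_iff_mem.1 hsub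
    exact h℘p.ne_top (Ideal.eq_top_of_isUnit_mem _ hcmem hcu)
  set θ : Polynomial ↥F₀ →+* Polynomial (K ⧸ ℘) := Polynomial.mapRingHom θc with hθ
  have hθapp : ∀ q : Polynomial ↥F₀, θ q = q.map θc := fun q => rfl
  have hqdvd : ∀ q ∈ fam, ∃ N a, τ ^ N = θ q * a := by
    intro q hq
    have hqmon := (hfammon q hq).1
    set qK : Polynomial K := q.map F₀.subtype with hqK
    have hqKne : qK ≠ 0 := (hqmon.map F₀.subtype).ne_zero
    have hqfix : ∀ m, φ (qK.coeff m) = qK.coeff m := by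
      intro m
      rw [hqK, coeff_map]
      exact (q.coeff m).2
    obtain ⟨w, hw⟩ := hunit qK hqKne hqfix
    refine hτdvd (θ q) ⟨μ w, himg w, ?_⟩
    have hψθ : ψ (θ q) = μ (aeval r qK) := by
      rw [hθapp, hθc, ← Polynomial.map_map, hψmap, hqK]
    rw [hψθ, ← map_mul, hw, map_one]
  -- gcds give a degree contradiction
  set G : Polynomial ↥F₀ → Polynomial (K ⧸ ℘) := fun q => EuclideanDomain.gcd (θ q) τ with hG
  have hθmon : ∀ q ∈ fam, (θ q).Monic := fun q hq => ((hfammon q hq).1).map θc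
  have hθdeg : ∀ q ∈ fam, (θ q).natDegree ≠ 0 := by
    intro q hq
    rw [hθapp, ((hfammon q hq).1).natDegree_map θc]
    exact (hfammon q hq).2
  have hnotcop : ∀ q ∈ fam, ¬ IsCoprime (θ q) τ := by
    intro q hq hcop
    obtain ⟨N, a, hNa⟩ := hqdvd q hq
    have hdvd : θ q ∣ τ ^ N := ⟨a, hNa⟩
    have hu : IsUnit (θ q) := (hcop.pow_right).isUnit_of_dvd' dvd_rfl hdvd
    exact hθdeg q hq (natDegree_eq_zero_of_isUnit hu)
  have hGdvd : ∀ q ∈ fam, G q ∣ τ := fun q _ => EuclideanDomain.gcd_dvd_right _ _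
  have hGne : ∀ q ∈ fam, G q ≠ 0 := fun q hq h0 =>
    hτne (EuclideanDomain.gcd_eq_zero_iff.1 h0).2
  have hGdeg : ∀ q ∈ fam, 1 ≤ (G q).natDegree := by
    intro q hq
    by_contra hd
    push_neg at hd
    have hd0 : (G q).natDegree = 0 := by omega
    obtain ⟨x, hx⟩ := natDegree_eq_zero.1 hd0
    have hx0 : x ≠ 0 := by
      intro h0
      rw [h0, C_0] at hx
      exact hGne q hq hx.symm
    have hGu : IsUnit (G q) := by
      rw [← hx]
      exact isUnit_C.2 hx0.isUnit
    exact hnotcop q hq (EuclideanDomain.gcd_isUnit_iff.1 hGu)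
  have hGcop : (↑fam : Set (Polynomial ↥F₀)).Pairwise (Function.onFun IsCoprime G) := by
    intro q1 h1 q2 h2 hne
    have h12 : IsCoprime (θ q1) (θ q2) := (hfamcop h1 h2 hne).map θ
    exact (h12.of_isCoprime_of_dvd_left (EuclideanDomain.gcd_dvd_left _ _)).of_isCoprime_of_dvd_right
      (EuclideanDomain.gcd_dvd_left _ _)
  have hproddvd : ∏ q ∈ fam, G q ∣ τ := Finset.prod_dvd_of_coprime hGcop hGdvd
  have hdegle : (∏ q ∈ fam, G q).natDegree ≤ τ.natDegree :=
    natDegree_le_of_dvd hproddvd hτne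
  have hdegprod : (∏ q ∈ fam, G q).natDegree = ∑ q ∈ fam, (G q).natDegree :=
    natDegree_prod _ _ fun q hq => hGne q hq
  have hsum : fam.card ≤ ∑ q ∈ fam, (G q).natDegree := by
    calc fam.card = fam.card • 1 := by rw [smul_eq_mul, mul_one]
    _ ≤ ∑ q ∈ fam, (G q).natDegree := Finset.card_nsmul_le_sum fam _ 1 hGdeg
  rw [hfamcard] at hsum
  rw [hdegprod] at hdegle
  omega


theorem alg_injective {K R : Type*} [CommRing K] [CommRing R] [Algebra K R]
    (φ : K →+* K) (φR : R →+* R) (hKs : DiffSimple φ)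
    (hcomp : ∀ a : K, φR (algebraMap K R a) = algebraMap K R (φ a))
    (hRnt : (0 : R) ≠ 1) : Function.Injective (algebraMap K R) := by
  have hker : ∀ a : K, algebraMap K R a = 0 → a = 0 := by
    have hst : ∀ x ∈ RingHom.ker (algebraMap K R), φ x ∈ RingHom.ker (algebraMap K R) := by
      intro x hx
      rw [RingHom.mem_ker] at hx ⊢
      rw [← hcomp, hx, map_zero]
    rcases hKs.2 _ hst with hbot | htop
    · intro a ha
      have hmem : a ∈ RingHom.ker (algebraMap K R) := by rwa [RingHom.mem_ker]
      rwa [hbot, Ideal.mem_bot] at hmem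
    · exfalso
      have hmem : (1 : K) ∈ RingHom.ker (algebraMap K R) := htop ▸ Submodule.mem_top
      rw [RingHom.mem_ker, map_one] at hmem
      exact hRnt hmem.symm
  intro a b hab
  have hsub : algebraMap K R (a - b) = 0 := by rw [map_sub, hab, sub_self]
  exact sub_eq_zero.1 (hker _ hsub)

/-- Let `K` be a `φ`-pseudo field and `R` a `φ`-simple `K`-`φ`-algebra that is finitely
generated as a `K`-algebra.  Then the `φ`-constants of `R` form a field, and every
`φ`-constant of `R` is algebraic over `K^φ` (it is a root of a nonzero polynomial whose
coefficients come from the image of `K^φ` in `R`). -/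
theorem constants_field_and_algebraic_of_finiteType
    {K R : Type*} [CommRing K] [CommRing R] [Algebra K R]
    (φ : K →+* K) (φR : R →+* R)
    (hPF : PseudoField K φ)
    (hcomp : ∀ a : K, φR (algebraMap K R a) = algebraMap K R (φ a))
    (hsimple : DiffSimple φR)
    (hfg : Algebra.FiniteType K R) :
    IsField ↥(RingHom.eqLocus φR (RingHom.id R)) ∧
    ∀ r : R, φR r = r → ∃ p : Polynomial R, p ≠ 0 ∧
      (∀ m : ℕ, ∃ a : K, φ a = a ∧ algebraMap K R a = p.coeff m) ∧
      Polynomial.eval r p = 0 := by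
  refine ⟨constants_isField hsimple, ?_⟩
  intro r hr
  obtain ⟨p0, hp0ne, hp0ev⟩ := hard_exists φ φR hPF hcomp hsimple hfg r hr
  obtain ⟨p, hpne, hpfix, hpev⟩ := exists_fixed_poly φ φR hPF.1 hcomp hr ⟨p0, hp0ne, hp0ev⟩
  have halginj : Function.Injective (algebraMap K R) :=
    alg_injective φ φR hPF.1 hcomp hsimple.zero_ne_one
  refine ⟨p.map (algebraMap K R), ?_, ?_, ?_⟩
  · intro h0
    exact hpne (Polynomial.map_injective _ halginj (by rw [h0, Polynomial.map_zero]))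
  · intro m
    exact ⟨p.coeff m, hpfix m, (Polynomial.coeff_map _ m).symm⟩
  · rw [Polynomial.eval_map, ← Polynomial.aeval_def]
    exact hpev
end

section
/- Let K be a field and let R and T be finitely generated commutative K-algebras. Let a be a proper ideal of R ⊗_K T and b a proper ideal of T ⊗_K R such that the preimage of a under the canonical map T → R ⊗_K T (t ↦ 1 ⊗ t) equals the preimage of b under the canonical map T → T ⊗_K R (t ↦ t ⊗ 1), as ideals of T. Then the ideal of R ⊗_K T ⊗_K R generated by the image of a under the ring homomorphism determined by r ⊗ t ↦ r ⊗ t ⊗ 1 together with the image of b under the ring homomorphism determined by t ⊗ r ↦ 1 ⊗ t ⊗ r is a proper ideal (does not contain 1). (This is the prolongation lemma in the generality established by its proof; the paper's version is the case where T is a d-fold tensor power of R.) -/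
open scoped TensorProduct

universe u₁ u₂ u₃ u₄
set_option synthInstance.maxHeartbeats 400000 in
theorem prolong_core {K : Type u₁} {D : Type u₂} {A : Type u₃} {B : Type u₄} [Field K] [CommRing D] [CommRing A] [CommRing B]
    [IsDomain D] [IsDomain A] [IsDomain B]
    [Algebra K D] [Algebra K A] [Algebra K B]
    (dA : D →ₐ[K] A) (dB : D →ₐ[K] B)
    (hdA : Function.Injective dA) (hdB : Function.Injective dB) :
    ∃ (E : Type (max u₃ u₄)) (_ : CommRing E) (_ : Algebra K E) (_ : Nontrivial E)
      (α : A →ₐ[K] E) (β : B →ₐ[K] E), α.comp dA = β.comp dB := by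
  classical
  let FA := FractionRing A
  let FB := FractionRing B
  let FD := FractionRing D
  let gA : D →+* FA := (algebraMap A FA).comp (dA : D →+* A)
  let gB : D →+* FB := (algebraMap B FB).comp (dB : D →+* B)
  have hgA : Function.Injective gA := (IsFractionRing.injective A FA).comp hdA
  have hgB : Function.Injective gB := (IsFractionRing.injective B FB).comp hdB
  letI : Algebra FD FA := (IsFractionRing.lift hgA).toAlgebra
  letI : Algebra FD FB := (IsFractionRing.lift hgB).toAlgebra
  let E := FA ⊗[FD] FB
  haveI : Nontrivial E := Module.FaithfullyFlat.rTensor_nontrivial FD FB FA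
  letI : Algebra K E :=
    ((Algebra.TensorProduct.includeLeftRingHom : FA →+* E).comp (algebraMap K FA)).toAlgebra
  let m : K →+* FD := (algebraMap D FD).comp (algebraMap K D)
  have hmkA : ∀ d : D, algebraMap A FA (dA d) = algebraMap FD FA (algebraMap D FD d) := by
    intro d
    show _ = IsFractionRing.lift hgA (algebraMap D FD d)
    rw [IsFractionRing.lift_algebraMap]
    rfl
  have hmkB : ∀ d : D, algebraMap B FB (dB d) = algebraMap FD FB (algebraMap D FD d) := by
    intro d
    show _ = IsFractionRing.lift hgB (algebraMap D FD d)
    rw [IsFractionRing.lift_algebraMap]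
    rfl
  have hKA : ∀ k : K, algebraMap K FA k = algebraMap FD FA (m k) := by
    intro k
    rw [IsScalarTower.algebraMap_apply K A FA k, ← dA.commutes k, hmkA]
    rfl
  have hKB : ∀ k : K, algebraMap K FB k = algebraMap FD FB (m k) := by
    intro k
    rw [IsScalarTower.algebraMap_apply K B FB k, ← dB.commutes k, hmkB]
    rfl
  let inclL := (Algebra.TensorProduct.includeLeft : FA →ₐ[FD] E)
  let inclR := (Algebra.TensorProduct.includeRight : FB →ₐ[FD] E)
  let inclLE : FA →ₐ[K] E :=
    { toRingHom := (Algebra.TensorProduct.includeLeftRingHom : FA →+* E),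
      commutes' := fun k => rfl }
  have hRE : ∀ k : K, inclR (algebraMap K FB k) = algebraMap K E k := by
    intro k
    show _ = (Algebra.TensorProduct.includeLeftRingHom : FA →+* E) (algebraMap K FA k)
    rw [hKA, hKB]
    exact (inclR.commutes (m k)).trans ((inclL.commutes (m k)).symm)
  let inclRE : FB →ₐ[K] E := { toRingHom := (inclR : FB →+* E), commutes' := hRE }
  refine ⟨E, inferInstance, inferInstance, inferInstance,
    inclLE.comp (IsScalarTower.toAlgHom K A FA),
    inclRE.comp (IsScalarTower.toAlgHom K B FB), ?_⟩
  apply AlgHom.ext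
  intro d
  show inclLE (algebraMap A FA (dA d)) = inclRE (algebraMap B FB (dB d))
  rw [hmkA, hmkB]
  exact (inclL.commutes _).trans ((inclR.commutes _).symm)

/-- The prolongation lemma: for finitely generated algebras `R`, `T` over a field `K`
and proper ideals `a ⊆ R ⊗ T`, `b ⊆ T ⊗ R` whose preimages in the middle factor `T`
coincide, the ideal of `R ⊗ T ⊗ R` generated by (the images of) `a` and `b` is proper. -/
theorem prolongation_lemma
    {K R T : Type*} [Field K] [CommRing R] [CommRing T]
    [Algebra K R] [Algebra K T]
    (hR : Algebra.FiniteType K R) (hT : Algebra.FiniteType K T)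
    (a : Ideal (R ⊗[K] T)) (ha : a ≠ ⊤)
    (b : Ideal (T ⊗[K] R)) (hb : b ≠ ⊤)
    (hmatch : Ideal.comap (Algebra.TensorProduct.includeRight : T →ₐ[K] R ⊗[K] T) a
            = Ideal.comap (Algebra.TensorProduct.includeLeft : T →ₐ[K] T ⊗[K] R) b) :
    Ideal.map
        (Algebra.TensorProduct.includeLeft :
          (R ⊗[K] T) →ₐ[K] (R ⊗[K] T) ⊗[K] R) a ⊔
      Ideal.map
        (Algebra.TensorProduct.map
          (Algebra.TensorProduct.includeRight : T →ₐ[K] R ⊗[K] T)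
          (AlgHom.id K R) :
          (T ⊗[K] R) →ₐ[K] (R ⊗[K] T) ⊗[K] R) b ≠ ⊤ := by
  classical
  set c : Ideal T :=
    Ideal.comap (Algebra.TensorProduct.includeRight : T →ₐ[K] R ⊗[K] T) a with hc
  have hcT : c ≠ ⊤ := by
    intro h
    apply ha
    rw [Ideal.eq_top_iff_one] at h ⊢
    have : (Algebra.TensorProduct.includeRight : T →ₐ[K] R ⊗[K] T) 1 ∈ a := h
    rwa [map_one] at this
  obtain ⟨M, hM, hcM⟩ := Ideal.exists_le_maximal c hcT
  haveI := hM.isPrime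
  obtain ⟨q, hq, -⟩ := Ideal.exists_minimalPrimes_le hcM
  haveI hqp : q.IsPrime := hq.1.1
  obtain ⟨P, hPp, haP, hPq⟩ := Ideal.exists_comap_eq_of_mem_minimalPrimes
      ((Algebra.TensorProduct.includeRight : T →ₐ[K] R ⊗[K] T) : T →+* R ⊗[K] T) q hq
  obtain ⟨Q, hQp, hbQ, hQq⟩ := Ideal.exists_comap_eq_of_mem_minimalPrimes
      ((Algebra.TensorProduct.includeLeft : T →ₐ[K] T ⊗[K] R) : T →+* T ⊗[K] R) q
      (hmatch ▸ hq)
  haveI := hPp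
  haveI := hQp
  -- the induced injections `T⧸q → (R⊗T)⧸P` and `T⧸q → (T⊗R)⧸Q`
  let dA : (T ⧸ q) →ₐ[K] ((R ⊗[K] T) ⧸ P) :=
    Ideal.quotientMapₐ P (Algebra.TensorProduct.includeRight : T →ₐ[K] R ⊗[K] T)
      (le_of_eq hPq.symm)
  let dB : (T ⧸ q) →ₐ[K] ((T ⊗[K] R) ⧸ Q) :=
    Ideal.quotientMapₐ Q (Algebra.TensorProduct.includeLeft : T →ₐ[K] T ⊗[K] R)
      (le_of_eq hQq.symm)
  have hdA : Function.Injective dA :=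
    Ideal.quotientMap_injective' (H := le_of_eq hPq.symm) (le_of_eq hPq)
  have hdB : Function.Injective dB :=
    Ideal.quotientMap_injective' (H := le_of_eq hQq.symm) (le_of_eq hQq)
  obtain ⟨E, _, _, _, α, β, hαβ⟩ := prolong_core dA dB hdA hdB
  -- the evaluation map
  let f1 : (R ⊗[K] T) →ₐ[K] E := α.comp (Ideal.Quotient.mkₐ K P)
  let f2 : R →ₐ[K] E :=
    (β.comp (Ideal.Quotient.mkₐ K Q)).comp
      (Algebra.TensorProduct.includeRight : R →ₐ[K] T ⊗[K] R)
  let ψ : ((R ⊗[K] T) ⊗[K] R) →ₐ[K] E :=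
    Algebra.TensorProduct.lift f1 f2 (fun x y => Commute.all _ _)
  have key : ∀ t : T, α (Ideal.Quotient.mk P ((1 : R) ⊗ₜ[K] t))
      = β (Ideal.Quotient.mk Q (t ⊗ₜ[K] (1 : R))) := by
    intro t
    have h1 : (Ideal.Quotient.mk P ((1 : R) ⊗ₜ[K] t)) = dA (Ideal.Quotient.mk q t) := by
      show _ = Ideal.quotientMapₐ P _ _ (Ideal.Quotient.mk q t)
      rw [Ideal.quotient_map_mkₐ]
      rfl
    have h2 : (Ideal.Quotient.mk Q (t ⊗ₜ[K] (1 : R))) = dB (Ideal.Quotient.mk q t) := by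
      show _ = Ideal.quotientMapₐ Q _ _ (Ideal.Quotient.mk q t)
      rw [Ideal.quotient_map_mkₐ]
      rfl
    rw [h1, h2]
    exact AlgHom.congr_fun hαβ (Ideal.Quotient.mk q t)
  have hψφ : ψ.comp (Algebra.TensorProduct.map
      (Algebra.TensorProduct.includeRight : T →ₐ[K] R ⊗[K] T) (AlgHom.id K R))
      = β.comp (Ideal.Quotient.mkₐ K Q) := by
    apply Algebra.TensorProduct.ext'
    intro t r
    show ψ (((1 : R) ⊗ₜ[K] t) ⊗ₜ[K] r) = β (Ideal.Quotient.mk Q (t ⊗ₜ[K] r))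
    rw [Algebra.TensorProduct.lift_tmul]
    have : (t ⊗ₜ[K] r : T ⊗[K] R) = (t ⊗ₜ[K] (1 : R)) * ((1 : T) ⊗ₜ[K] r) := by
      rw [Algebra.TensorProduct.tmul_mul_tmul, one_mul, mul_one]
    rw [this, map_mul, map_mul]
    congr 1
    exact key t
  refine ne_top_of_le_ne_top (RingHom.ker_ne_top (ψ : ((R ⊗[K] T) ⊗[K] R) →+* E)) ?_
  refine sup_le ?_ ?_
  · rw [Ideal.map_le_iff_le_comap]
    intro x hx
    show ψ ((Algebra.TensorProduct.includeLeft :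
        (R ⊗[K] T) →ₐ[K] (R ⊗[K] T) ⊗[K] R) x) = 0
    show ψ (x ⊗ₜ[K] (1 : R)) = 0
    rw [Algebra.TensorProduct.lift_tmul, map_one, mul_one]
    show α (Ideal.Quotient.mk P x) = 0
    rw [Ideal.Quotient.eq_zero_iff_mem.mpr (haP hx), map_zero]
  · rw [Ideal.map_le_iff_le_comap]
    intro y hy
    show ψ ((Algebra.TensorProduct.map
      (Algebra.TensorProduct.includeRight : T →ₐ[K] R ⊗[K] T) (AlgHom.id K R)) y) = 0
    have := AlgHom.congr_fun hψφ y
    rw [AlgHom.comp_apply] at this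
    rw [this]
    show β (Ideal.Quotient.mk Q y) = 0
    rw [Ideal.Quotient.eq_zero_iff_mem.mpr (hbQ hy), map_zero]
end

section
/- Let k be a field with a surjective ring endomorphism σ_k, let R be a commutative k-algebra equipped with an injective ring endomorphism σ_R satisfying σ_R(c • r) = σ_k(c) • σ_R(r) for all c ∈ k, r ∈ R, and let K be a field extension of k equipped with a ring endomorphism σ_K extending σ_k. Let Σ : R ⊗_k K → R ⊗_k K be the (unique) ring endomorphism satisfying Σ(r ⊗ x) = σ_R(r) ⊗ σ_K(x). Then: (1) Σ is injective; and (2) if a is an ideal of R with σ_R^{-1}(a) = a, then the ideal a' of R ⊗_k K generated by the image of a under r ↦ r ⊗ 1 satisfies Σ^{-1}(a') = a'. -/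
open scoped TensorProduct

lemma basis_sumExtend_apply_inl {K V ι : Type*} [DivisionRing K] [AddCommGroup V] [Module K V]
    {v : ι → V} (hs : LinearIndependent K v) (i : ι) :
    Module.Basis.sumExtend hs (Sum.inl i) = v i := by
  classical
  simp only [Module.Basis.sumExtend, Module.Basis.reindex_apply, Equiv.symm_symm, Trans.trans,
    Equiv.trans_apply, Module.Basis.coe_extend]
  set e := Equiv.ofInjective v hs.injective with he
  show ((Equiv.Set.sumDiffSubset (hs.linearIndepOn_id.subset_extend _)) (Sum.map e (Equiv.refl _) (Sum.inl i)) : V) = v i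
  rw [Sum.map_inl, Equiv.Set.sumDiffSubset_apply_inl]
  simp [he]

/-- Let `k` be an inversive `σ`-field, `R` a `k`-`σ`-algebra with `σ_R` injective, and
`K` a `σ`-field extension of `k`.  Then the induced endomorphism `Σ = σ_R ⊗ σ_K` of
`R ⊗[k] K` is injective, and for every reflexive `σ`-ideal `a` of `R` (i.e.
`σ_R⁻¹(a) = a`) the ideal generated by `a` in `R ⊗[k] K` is a reflexive `Σ`-ideal. -/
theorem tensor_endomorphism_injective_and_reflexive_ideals
    {k R K : Type*} [Field k] [CommRing R] [Algebra k R] [Field K] [Algebra k K]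
    (σk : k →+* k) (hsurj : Function.Surjective σk)
    (σR : R →+* R) (hinjR : Function.Injective σR)
    (hcompatR : ∀ (c : k) (r : R), σR (c • r) = σk c • σR r)
    (σK : K →+* K) (hcompatK : ∀ c : k, σK (algebraMap k K c) = algebraMap k K (σk c))
    (σT : (R ⊗[k] K) →+* (R ⊗[k] K))
    (hsigT : ∀ (r : R) (x : K), σT (r ⊗ₜ[k] x) = σR r ⊗ₜ[k] σK x) :
    Function.Injective σT ∧
    ∀ a : Ideal R, Ideal.comap σR a = a →
      Ideal.comap σT
          (Ideal.map (Algebra.TensorProduct.includeLeft : R →ₐ[k] R ⊗[k] K) a)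
        = Ideal.map (Algebra.TensorProduct.includeLeft : R →ₐ[k] R ⊗[k] K) a := by
  classical
  -- σk is bijective
  have hσk : Function.Bijective σk := ⟨σk.injective, hsurj⟩
  let e : k ≃+* k := RingEquiv.ofBijective σk hσk
  -- σK is σk-semilinear
  have hKsmul : ∀ (c : k) (x : K), σK (c • x) = σk c • σK x := by
    intro c x
    rw [Algebra.smul_def, Algebra.smul_def, map_mul, hcompatK]
  -- a basis of K over k
  set b : Module.Basis (Module.Basis.ofVectorSpaceIndex k K) k K := Module.Basis.ofVectorSpace k K with hb
  -- the family σK ∘ b is linearly independent over k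
  have li : LinearIndependent k (fun i => σK (b i)) := by
    rw [linearIndependent_iff']
    intro s g hg i hi
    have h0 : ∑ j ∈ s, (e.symm (g j)) • b j = 0 := by
      apply RingHom.injective σK
      rw [map_sum, map_zero]
      rw [← hg]
      refine Finset.sum_congr rfl fun j _ => ?_
      rw [hKsmul]
      congr 1
      exact e.apply_symm_apply (g j)
    have h1 : e.symm (g i) = 0 :=
      linearIndependent_iff'.mp b.linearIndependent s (fun j => e.symm (g j)) h0 i hi
    rw [← e.apply_symm_apply (g i), h1, map_zero]
  -- extend to a basis and take coordinate functionals
  let B2 := Module.Basis.sumExtend li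
  have hB2 : ∀ i, B2 (Sum.inl i) = σK (b i) := fun i => basis_sumExtend_apply_inl li i
  -- the key statement about ideals
  have part2 : ∀ a : Ideal R, Ideal.comap σR a = a →
      Ideal.comap σT
          (Ideal.map (Algebra.TensorProduct.includeLeft : R →ₐ[k] R ⊗[k] K) a)
        = Ideal.map (Algebra.TensorProduct.includeLeft : R →ₐ[k] R ⊗[k] K) a := by
    intro a ha
    set a' : Ideal (R ⊗[k] K) :=
      Ideal.map (Algebra.TensorProduct.includeLeft : R →ₐ[k] R ⊗[k] K) a with ha'
    have hmem : ∀ r : R, r ∈ a ↔ σR r ∈ a := by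
      intro r
      constructor
      · intro hr; rw [← ha] at hr; exact hr
      · intro hr; rw [← ha]; exact hr
    -- quotient algebra map
    let f : (R ⊗[k] K) →ₐ[k] ((R ⧸ a) ⊗[k] K) :=
      Algebra.TensorProduct.map (Ideal.Quotient.mkₐ k a) (AlgHom.id k K)
    -- a' is contained in the kernel of f
    have hker : a' ≤ RingHom.ker (f : (R ⊗[k] K) →+* ((R ⧸ a) ⊗[k] K)) := by
      rw [ha']
      rw [Ideal.map_le_iff_le_comap]
      intro r hr
      show f ((Algebra.TensorProduct.includeLeft : R →ₐ[k] R ⊗[k] K) r) = 0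
      simp only [Algebra.TensorProduct.includeLeft_apply, f, Algebra.TensorProduct.map_tmul,
        AlgHom.coe_id, id_eq, Ideal.Quotient.mkₐ_eq_mk]
      rw [Ideal.Quotient.eq_zero_iff_mem.mpr hr, TensorProduct.zero_tmul]
    -- base-changed basis of R ⊗ K over R
    let B : Module.Basis (Module.Basis.ofVectorSpaceIndex k K) R (R ⊗[k] K) := b.baseChange R
    apply le_antisymm
    · -- hard direction
      intro t htmem
      have hft : f (σT t) = 0 := hker (Ideal.mem_comap.mp htmem)
      set r : _ →₀ R := B.repr t with hr
      have ht : t = r.sum fun i c => c ⊗ₜ[k] b i := by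
        conv_lhs => rw [← B.linearCombination_repr t]
        rw [Finsupp.linearCombination_apply]
        refine Finsupp.sum_congr fun i _ => ?_
        show (r i) • B i = _
        rw [show B i = (1 : R) ⊗ₜ[k] b i from Module.Basis.baseChange_apply R b i,
          TensorProduct.smul_tmul', smul_eq_mul, mul_one]
      -- coordinates of r lie in a
      have hra : ∀ j, r j ∈ a := by
        intro j
        have hσTt : σT t = r.sum fun i c => σR c ⊗ₜ[k] σK (b i) := by
          rw [ht, map_finsuppSum]
          exact Finsupp.sum_congr fun i _ => hsigT _ _
        have hfσTt : r.sum (fun i c =>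
            (Ideal.Quotient.mk a (σR c)) ⊗ₜ[k] σK (b i)) = 0 := by
          rw [← hft, hσTt, map_finsuppSum]
          refine Finsupp.sum_congr fun i _ => ?_
          simp [f]
        -- apply the coordinate functional
        let φ : K →ₗ[k] k := B2.coord (Sum.inl j)
        have hφ : ∀ i, φ (σK (b i)) = if i = j then 1 else 0 := by
          intro i
          rw [← hB2 i]
          simp only [φ, Module.Basis.coord_apply, Module.Basis.repr_self]
          rw [Finsupp.single_apply]
          simp [Sum.inl.injEq]
        let ψ : ((R ⧸ a) ⊗[k] K) →ₗ[k] (R ⧸ a) :=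
          (TensorProduct.rid k (R ⧸ a)).toLinearMap ∘ₗ LinearMap.lTensor (R ⧸ a) φ
        have hψ : ∀ (s : R ⧸ a) (x : K), ψ (s ⊗ₜ[k] x) = φ x • s := by
          intro s x
          simp [ψ, TensorProduct.rid_tmul]
        have h0 : ψ (r.sum (fun i c => (Ideal.Quotient.mk a (σR c)) ⊗ₜ[k] σK (b i))) = 0 := by
          rw [hfσTt, map_zero]
        rw [map_finsuppSum] at h0
        have h0' : (r.sum fun i c =>
            if i = j then (Ideal.Quotient.mk a (σR c)) else 0) = 0 := by
          have hs2 : (r.sum fun i c =>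
              if i = j then (Ideal.Quotient.mk a (σR c)) else 0)
              = r.sum fun i c => ψ ((Ideal.Quotient.mk a (σR c)) ⊗ₜ[k] σK (b i)) := by
            refine Finsupp.sum_congr fun i _ => ?_
            rw [hψ, hφ]
            by_cases hij : i = j <;> simp [hij]
          exact hs2.trans h0
        rw [Finsupp.sum, Finset.sum_ite_eq'] at h0'
        have hσrj : Ideal.Quotient.mk a (σR (r j)) = 0 := by
          by_cases hjs : j ∈ r.support
          · rw [if_pos hjs] at h0'; exact h0'
          · have : r j = 0 := Finsupp.notMem_support_iff.mp hjs
            rw [this, map_zero, map_zero]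
        have : σR (r j) ∈ a := Ideal.Quotient.eq_zero_iff_mem.mp hσrj
        exact (hmem (r j)).mpr this
      -- conclude t ∈ a'
      rw [ht]
      refine Ideal.sum_mem a' ?_
      intro i _
      show (r i) ⊗ₜ[k] b i ∈ a'
      have h1 : ((r i) ⊗ₜ[k] (1 : K) : R ⊗[k] K) ∈ a' :=
        Ideal.mem_map_of_mem _ (hra i)
      have h2 : (r i) ⊗ₜ[k] b i = ((r i) ⊗ₜ[k] (1 : K)) * ((1 : R) ⊗ₜ[k] b i) := by
        rw [Algebra.TensorProduct.tmul_mul_tmul, mul_one, one_mul]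
      rw [h2]
      exact Ideal.mul_mem_right _ _ h1
    · -- easy direction
      rw [ha', Ideal.map_le_iff_le_comap]
      intro x hx
      rw [Ideal.mem_comap, Ideal.mem_comap]
      show σT ((Algebra.TensorProduct.includeLeft : R →ₐ[k] R ⊗[k] K) x) ∈ a'
      rw [Algebra.TensorProduct.includeLeft_apply, hsigT, map_one]
      exact Ideal.mem_map_of_mem _ ((hmem x).mp hx)
  refine ⟨?_, part2⟩
  -- injectivity from the case a = ⊥
  have hbot : Ideal.comap σR ⊥ = ⊥ := by
    have := (RingHom.injective_iff_ker_eq_bot σR).mp hinjR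
    rwa [RingHom.ker] at this
  have := part2 ⊥ hbot
  rw [Ideal.map_bot] at this
  rw [RingHom.injective_iff_ker_eq_bot, RingHom.ker]
  exact this
end

section
/- Let K be a commutative ring with two commuting ring endomorphisms φ and σ such that (K, φ) is a φ-pseudo field, and let R be a σ-PV ring over K for an equation φ(y) = A y, A ∈ GL_n(K) (i.e., R is a K-algebra with commuting endomorphisms Φ and Σ extending φ and σ, Φ-simple, a Φ-pseudo domain, generated as a K-algebra by the entries of Σ^i(Y) and the inverses (det Σ^i(Y))^{-1} for all i ≥ 0 for a fundamental solution matrix Y ∈ GL_n(R) with Φ(Y) = (algebraMap A)·Y). Assume R^Φ equals the image of k := K^φ (a field) under the algebra map. Consider the ring C := R ⊗_K R with the endomorphism Φ ⊗ Φ, and let H := C^{Φ⊗Φ} be its subring of (Φ ⊗ Φ)-constants; H contains the image of k (via c ↦ c ⊗ 1 = 1 ⊗ c) and is thereby a k-algebra. Then the ring homomorphism μ : R ⊗_k H → R ⊗_K R determined by μ(r ⊗ h) = (r ⊗ 1) · h is bijective. -/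
open scoped TensorProduct

/-- The subring of `φ`-constants of a ring with endomorphism `φ`. -/
def constSubring {R : Type*} [CommRing R] (φ : R →+* R) : Subring R :=
  RingHom.eqLocus φ (RingHom.id R)

/-- The canonical map from `k = K^φ` to `H = (R ⊗_K R)^{Φ ⊗ Φ}`, sending `c` to
`c ⊗ 1 = 1 ⊗ c`. -/
noncomputable def kToH {K R : Type*} [CommRing K] [CommRing R] [Algebra K R]
    (φ : K →+* K) (Φ : R →+* R)
    (hΦ : ∀ a : K, Φ (algebraMap K R a) = algebraMap K R (φ a))
    (ΦC : (R ⊗[K] R) →+* (R ⊗[K] R))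
    (hΦC : ∀ r s : R, ΦC (r ⊗ₜ[K] s) = Φ r ⊗ₜ[K] Φ s) :
    ↥(constSubring φ) →+* ↥(constSubring ΦC) where
  toFun a := ⟨(algebraMap K R ↑a) ⊗ₜ[K] (1 : R), by
    have ha : φ ↑a = ↑a := a.2
    show ΦC ((algebraMap K R ↑a) ⊗ₜ[K] (1 : R)) = (algebraMap K R ↑a) ⊗ₜ[K] (1 : R)
    rw [hΦC, map_one, hΦ, ha]⟩
  map_one' := by ext; simp [Algebra.TensorProduct.one_def]
  map_mul' a b := by ext; simp [Algebra.TensorProduct.tmul_mul_tmul]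
  map_zero' := by ext; simp
  map_add' a b := by ext; simp [TensorProduct.add_tmul, map_add]

theorem mem_constSubring {R : Type*} [CommRing R] {φ : R →+* R} {x : R} :
    x ∈ constSubring φ ↔ φ x = x := Iff.rfl

theorem const_inv {S : Type*} [CommRing S] (f : S →+* S) {x y : S}
    (hx : f x = x) (h : x * y = 1) : f y = y := by
  have h2 : x * f y = 1 := by rw [← hx, ← map_mul, h, map_one]
  calc f y = (y * x) * f y := by rw [mul_comm y x, h, one_mul]
    _ = y * (x * f y) := mul_assoc _ _ _
    _ = y := by rw [h2, mul_one]

theorem key_li {K R : Type*} [CommRing K] [CommRing R] [Algebra K R]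
    (φ : K →+* K) (Φ : R →+* R)
    (hsimple : DiffSimple Φ)
    (hconst : ∀ r : R, Φ r = r ↔ ∃ a : K, φ a = a ∧ algebraMap K R a = r)
    (ΦC : (R ⊗[K] R) →+* (R ⊗[K] R))
    (hΦC : ∀ r s : R, ΦC (r ⊗ₜ[K] s) = Φ r ⊗ₜ[K] Φ s)
    {ι : Type*} (b : ι → (R ⊗[K] R)) (hbc : ∀ i, ΦC (b i) = b i)
    (hb : ∀ (t : Finset ι) (d : ι → K), (∀ i ∈ t, φ (d i) = d i) →
        (∑ i ∈ t, ((algebraMap K R (d i)) ⊗ₜ[K] (1:R)) * b i) = 0 → ∀ i ∈ t, d i = 0)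
    (t : Finset ι) : ∀ (c : ι → R),
        (∑ i ∈ t, (c i ⊗ₜ[K] (1:R)) * b i) = 0 → ∀ i ∈ t, c i = 0 := by
  classical
  induction t using Finset.strongInduction with
  | _ t IH =>
    intro c hrel i0 hi0
    by_contra hne
    let a : Ideal R :=
      { carrier := {r : R | ∃ c' : ι → R, c' i0 = r ∧ ∑ i ∈ t, (c' i ⊗ₜ[K] (1:R)) * b i = 0}
        add_mem' := by
          rintro x y ⟨cx, rfl, hx⟩ ⟨cy, rfl, hy⟩
          exact ⟨fun i => cx i + cy i, rfl, by
            simp only [TensorProduct.add_tmul, add_mul]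
            rw [Finset.sum_add_distrib, hx, hy, add_zero]⟩
        zero_mem' := ⟨fun _ => 0, rfl, by simp⟩
        smul_mem' := by
          rintro r x ⟨cx, rfl, hx⟩
          refine ⟨fun i => r * cx i, rfl, ?_⟩
          have he : ∀ i, ((r * cx i) ⊗ₜ[K] (1:R)) * b i
              = (r ⊗ₜ[K] (1:R)) * ((cx i ⊗ₜ[K] (1:R)) * b i) := by
            intro i
            rw [← mul_assoc, Algebra.TensorProduct.tmul_mul_tmul, one_mul]
          rw [Finset.sum_congr rfl fun i _ => he i, ← Finset.mul_sum, hx, mul_zero] }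
    have hmem : c i0 ∈ a := ⟨c, rfl, hrel⟩
    have hstab : ∀ x ∈ a, Φ x ∈ a := by
      rintro x ⟨cx, rfl, hx⟩
      refine ⟨fun i => Φ (cx i), rfl, ?_⟩
      have h0 := congrArg ΦC hx
      rw [map_sum, map_zero] at h0
      rw [← h0]
      refine Finset.sum_congr rfl fun i _ => ?_
      rw [map_mul, hΦC, map_one, hbc i]
    rcases hsimple.2 a hstab with hbot | htop
    · rw [hbot, Ideal.mem_bot] at hmem
      exact hne hmem
    · have h1 : (1:R) ∈ a := by rw [htop]; trivial
      obtain ⟨c', hc'0, hc'rel⟩ := h1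
      have h0 := congrArg ΦC hc'rel
      rw [map_sum, map_zero] at h0
      have h0' : ∑ i ∈ t, (Φ (c' i) ⊗ₜ[K] (1:R)) * b i = 0 := by
        rw [← h0]
        exact (Finset.sum_congr rfl fun i _ => by rw [map_mul, hΦC, map_one, hbc i]).symm
      have h2 : ∑ i ∈ t, ((Φ (c' i) - c' i) ⊗ₜ[K] (1:R)) * b i = 0 := by
        calc ∑ i ∈ t, ((Φ (c' i) - c' i) ⊗ₜ[K] (1:R)) * b i
            = ∑ i ∈ t, ((Φ (c' i) ⊗ₜ[K] (1:R)) * b i - (c' i ⊗ₜ[K] (1:R)) * b i) := by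
              refine Finset.sum_congr rfl fun i _ => ?_
              rw [TensorProduct.sub_tmul, sub_mul]
          _ = 0 := by rw [Finset.sum_sub_distrib, h0', hc'rel, sub_zero]
      have h3 : ∑ i ∈ t.erase i0, ((Φ (c' i) - c' i) ⊗ₜ[K] (1:R)) * b i = 0 := by
        have h4 := Finset.add_sum_erase t
          (fun i => ((Φ (c' i) - c' i) ⊗ₜ[K] (1:R)) * b i) hi0
        rw [h2] at h4
        have h5 : ((Φ (c' i0) - c' i0) ⊗ₜ[K] (1:R)) * b i0 = 0 := by
          rw [hc'0, map_one, sub_self, TensorProduct.zero_tmul, zero_mul]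
        simp only [h5, zero_add] at h4
        exact h4
      have h4 : ∀ i ∈ t.erase i0, Φ (c' i) - c' i = 0 :=
        IH (t.erase i0) (Finset.erase_ssubset hi0) _ h3
      have h5 : ∀ i ∈ t, Φ (c' i) = c' i := by
        intro i hi
        by_cases h : i = i0
        · rw [h, hc'0, map_one]
        · exact sub_eq_zero.mp (h4 i (Finset.mem_erase.mpr ⟨h, hi⟩))
      have h6 : ∀ i ∈ t, ∃ a : K, φ a = a ∧ algebraMap K R a = c' i :=
        fun i hi => (hconst (c' i)).mp (h5 i hi)
      choose aa ha1 ha2 using h6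
      have h7 : ∀ i ∈ t, (fun i => if h : i ∈ t then aa i h else 0) i = 0 := by
        refine hb t _ (fun i hi => ?_) ?_
        · simp only [dif_pos hi]; exact ha1 i hi
        · rw [← hc'rel]
          refine Finset.sum_congr rfl fun i hi => ?_
          simp only [dif_pos hi]
          rw [ha2 i hi]
      have h8 := h7 i0 hi0
      simp only [dif_pos hi0] at h8
      have h9 : (1:R) = 0 := by
        rw [← hc'0, ← ha2 i0 hi0, h8, map_zero]
      exact hsimple.1 ((Ideal.eq_top_iff_one _).mpr (Ideal.mem_bot.mpr h9))

set_option maxHeartbeats 1600000 in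
set_option synthInstance.maxHeartbeats 1000000 in
/-- The torsor lemma: if `R` is a `σ`-PV ring over `K` with `R^Φ = K^φ = k`, then the
multiplication map `μ : R ⊗_k H → R ⊗_K R`, `r ⊗ h ↦ (r ⊗ 1) · h`, where
`H = (R ⊗_K R)^{Φ ⊗ Φ}`, is bijective. -/
theorem torsor_mu_bijective
    {K R : Type*} [CommRing K] [CommRing R] [Algebra K R] {n : ℕ}
    (φ σ : K →+* K) (hcomm : ∀ a : K, φ (σ a) = σ (φ a))
    (hPF : PseudoField K φ)
    (A : Matrix (Fin n) (Fin n) K) (hA : IsUnit A.det)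
    (Φ σ' : R →+* R) (hcommR : ∀ x : R, Φ (σ' x) = σ' (Φ x))
    (hΦ : ∀ a : K, Φ (algebraMap K R a) = algebraMap K R (φ a))
    (hσ : ∀ a : K, σ' (algebraMap K R a) = algebraMap K R (σ a))
    (hsimple : DiffSimple Φ) (hdom : PseudoDomain Φ)
    (Y : Matrix (Fin n) (Fin n) R) (w : ℕ → R)
    (hY : Y.map ⇑Φ = A.map ⇑(algebraMap K R) * Y)
    (hw : ∀ i : ℕ, (Y.map ((⇑σ')^[i])).det * w i = 1)
    (hgen : Algebra.adjoin K
      ({x : R | ∃ (i : ℕ) (p q : Fin n), (Y.map ((⇑σ')^[i])) p q = x} ∪ Set.range w) = ⊤)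
    -- `R^Φ` equals the image of `k = K^φ`
    (hconst : ∀ r : R, Φ r = r ↔ ∃ a : K, φ a = a ∧ algebraMap K R a = r)
    -- `Φ ⊗ Φ` on `C = R ⊗_K R`
    (ΦC : (R ⊗[K] R) →+* (R ⊗[K] R))
    (hΦC : ∀ r s : R, ΦC (r ⊗ₜ[K] s) = Φ r ⊗ₜ[K] Φ s) :
    letI : Algebra ↥(constSubring φ) R :=
      ((algebraMap K R).comp (constSubring φ).subtype).toAlgebra
    letI : Algebra ↥(constSubring φ) ↥(constSubring ΦC) := (kToH φ Φ hΦ ΦC hΦC).toAlgebra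
    ∃ μ : (R ⊗[↥(constSubring φ)] ↥(constSubring ΦC)) →+* (R ⊗[K] R),
      (∀ (r : R) (h : ↥(constSubring ΦC)),
        μ (r ⊗ₜ h) = (r ⊗ₜ[K] (1 : R)) * (↑h : R ⊗[K] R)) ∧
      Function.Bijective μ := by
  letI i1 : Algebra ↥(constSubring φ) R :=
    ((algebraMap K R).comp (constSubring φ).subtype).toAlgebra
  classical
  letI i2 : Algebra ↥(constSubring φ) ↥(constSubring ΦC) := (kToH φ Φ hΦ ΦC hΦC).toAlgebra
  letI i3 : Algebra ↥(constSubring φ) (R ⊗[K] R) :=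
    ((constSubring ΦC).subtype.comp (kToH φ Φ hΦ ΦC hΦC)).toAlgebra
  letI : @IsScalarTower ↥(constSubring φ) ↥(constSubring φ) (R ⊗[K] R)
      Algebra.toSMul (@Algebra.toSMul _ _ _ _ i3) (@Algebra.toSMul _ _ _ _ i3) :=
    @IsScalarTower.of_algebraMap_eq' _ _ _ _ _ _ _ i3 i3 rfl
  let f : R →ₐ[↥(constSubring φ)] (R ⊗[K] R) :=
    { toRingHom := Algebra.TensorProduct.includeLeftRingHom, commutes' := fun c => rfl }
  let g : ↥(constSubring ΦC) →ₐ[↥(constSubring φ)] (R ⊗[K] R) :=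
    { toRingHom := (constSubring ΦC).subtype, commutes' := fun c => rfl }
  let μA := Algebra.TensorProduct.lift f g (fun x y => Commute.all _ _)
  let μ : (R ⊗[↥(constSubring φ)] ↥(constSubring ΦC)) →+* (R ⊗[K] R) := μA.toRingHom
  have hform : ∀ (r : R) (h : ↥(constSubring ΦC)),
      μ (r ⊗ₜ h) = (r ⊗ₜ[K] (1 : R)) * (↑h : R ⊗[K] R) := fun r h =>
    Algebra.TensorProduct.lift_tmul f g (fun x y => Commute.all _ _) r h
  simp only [← RingHom.coe_pow] at hw hgen
  -- nontriviality
  have hKnt : Nontrivial K := by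
    by_contra h
    rw [not_nontrivial_iff_subsingleton] at h
    refine hPF.1.1 (Ideal.ext fun x => ?_)
    simp only [Ideal.mem_bot, Submodule.mem_top, iff_true]
    exact Subsingleton.elim x 0
  have hRnt : Nontrivial R := by
    by_contra h
    rw [not_nontrivial_iff_subsingleton] at h
    refine hsimple.1 (Ideal.ext fun x => ?_)
    simp only [Ideal.mem_bot, Submodule.mem_top, iff_true]
    exact Subsingleton.elim x 0
  -- the constants of `K` form a field
  have hfld : IsField ↥(constSubring φ) := by
    refine ⟨⟨0, 1, fun h => ?_⟩, mul_comm, fun {a} ha => ?_⟩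
    · exact zero_ne_one (α := K) (congrArg Subtype.val h)
    · have haK : (a : K) ≠ 0 := fun h => ha (Subtype.ext h)
      have hst : ∀ x ∈ Ideal.span {(a : K)}, φ x ∈ Ideal.span {(a : K)} := by
        intro x hx
        rw [Ideal.mem_span_singleton] at hx ⊢
        obtain ⟨r, rfl⟩ := hx
        have ha2 : φ (a : K) = a := a.2
        exact ⟨φ r, by rw [map_mul, ha2]⟩
      rcases hPF.1.2 _ hst with hI | hI
      · exact absurd (Ideal.span_singleton_eq_bot.mp hI) haK
      · obtain ⟨cc, hc⟩ := Ideal.mem_span_singleton'.mp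
          (hI ▸ Submodule.mem_top : (1:K) ∈ Ideal.span {(a:K)})
        have hac : (a:K) * cc = 1 := by rw [mul_comm]; exact hc
        have hφc : φ cc = cc := by
          have h2 : (a:K) * φ cc = 1 := by
            have h3 := congrArg φ hac
            rw [map_mul, map_one] at h3
            rwa [(a.2 : φ (a:K) = a)] at h3
          calc φ cc = (cc * (a:K)) * φ cc := by rw [mul_comm cc, hac, one_mul]
            _ = cc * ((a:K) * φ cc) := mul_assoc _ _ _
            _ = cc := by rw [h2, mul_one]
        exact ⟨⟨cc, hφc⟩, Subtype.ext hac⟩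
  -- basic maps
  have halg' : ∀ a : K, (algebraMap K R a) ⊗ₜ[K] (1:R) = (1:R) ⊗ₜ[K] (algebraMap K R a) := by
    intro a
    rw [Algebra.algebraMap_eq_smul_one]
    exact TensorProduct.smul_tmul a 1 1
  let l : R →+* (R ⊗[K] R) := Algebra.TensorProduct.includeLeftRingHom
  let rr : R →+* (R ⊗[K] R) :=
    (Algebra.TensorProduct.includeRight : R →ₐ[K] R ⊗[K] R).toRingHom
  have hlap : ∀ x : R, l x = x ⊗ₜ[K] 1 := fun x => rfl
  have hrap : ∀ x : R, rr x = (1:R) ⊗ₜ[K] x := fun x => rfl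
  have hΦl : ∀ x : R, ΦC (l x) = l (Φ x) := fun x => by
    rw [hlap, hlap, hΦC, map_one]
  have hΦr : ∀ x : R, ΦC (rr x) = rr (Φ x) := fun x => by
    rw [hrap, hrap, hΦC, map_one]
  have halg : ∀ a : K, l (algebraMap K R a) = rr (algebraMap K R a) := by
    intro a
    rw [hlap, hrap]
    exact halg' a
  -- iterates
  have hσit : ∀ (m : ℕ) (a : K), (σ' ^ m) (algebraMap K R a) = algebraMap K R ((σ ^ m) a) := by
    intro m
    induction m with
    | zero => exact fun a => rfl
    | succ m ih =>
      intro a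
      calc (σ' ^ (m+1)) (algebraMap K R a) = (σ' ^ m) (σ' (algebraMap K R a)) := by
            rw [RingHom.coe_pow, RingHom.coe_pow, Function.iterate_succ_apply]
        _ = (σ' ^ m) (algebraMap K R (σ a)) := by rw [hσ]
        _ = algebraMap K R ((σ ^ m) (σ a)) := ih _
        _ = algebraMap K R ((σ ^ (m+1)) a) := by
            rw [RingHom.coe_pow, RingHom.coe_pow, Function.iterate_succ_apply]
  have hΦσit : ∀ (m : ℕ) (x : R), Φ ((σ' ^ m) x) = (σ' ^ m) (Φ x) := by
    intro m
    induction m with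
    | zero => exact fun x => rfl
    | succ m ih =>
      intro x
      have h1 := ih (σ' x)
      simp only [RingHom.coe_pow] at h1 ⊢
      rw [Function.iterate_succ_apply, Function.iterate_succ_apply, h1, hcommR]
  have hYent : ∀ p q, Φ (Y p q) = ∑ j, (A.map ⇑(algebraMap K R)) p j * Y j q := by
    intro p q
    have h : (Y.map ⇑Φ) p q = (A.map ⇑(algebraMap K R) * Y) p q := by rw [hY]
    simpa [Matrix.map_apply, Matrix.mul_apply] using h
  -- r ⊗ 1 is in the range
  have hleft : ∀ r : R, r ⊗ₜ[K] (1:R) ∈ RingHom.range μ := by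
    intro r
    refine RingHom.mem_range.mpr ⟨r ⊗ₜ (1 : ↥(constSubring ΦC)), ?_⟩
    rw [hform, OneMemClass.coe_one, mul_one]
  -- the key computation with the fundamental matrices
  have hkey : ∀ i : ℕ,
      (∀ p q : Fin n, (1:R) ⊗ₜ[K] ((Y.map ⇑(σ' ^ i)) p q) ∈ RingHom.range μ)
      ∧ (1:R) ⊗ₜ[K] (w i) ∈ RingHom.range μ := by
    intro i
    set Yi : Matrix (Fin n) (Fin n) R := Y.map ⇑(σ' ^ i) with hYidef
    set Bi : Matrix (Fin n) (Fin n) R := (A.map ⇑(algebraMap K R)).map ⇑(σ' ^ i) with hBidef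
    have hYiΦ : Yi.map ⇑Φ = Bi * Yi := by
      ext p q
      simp only [hYidef, hBidef, Matrix.map_apply, Matrix.mul_apply]
      rw [hΦσit, hYent p q, map_sum]
      exact Finset.sum_congr rfl fun j _ => by rw [map_mul, Matrix.map_apply]
    have hwi : Yi.det * w i = 1 := hw i
    set LiC := l.mapMatrix Yi with hLiCdef
    set RiC := rr.mapMatrix Yi with hRiCdef
    set BiC := l.mapMatrix Bi with hBiCdef
    have hLdet : LiC.det = l Yi.det := (RingHom.map_det l Yi).symm
    have hRdet : RiC.det = rr Yi.det := (RingHom.map_det rr Yi).symm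
    have hBiLR : rr.mapMatrix Bi = BiC := by
      ext p q
      simp only [hBidef, hBiCdef, RingHom.mapMatrix_apply, Matrix.map_apply]
      rw [hσit]
      exact (halg _).symm
    haveI hdetInv : Invertible LiC.det :=
      ⟨l (w i), by rw [hLdet, ← map_mul, mul_comm (w i) Yi.det, hwi, map_one],
        by rw [hLdet, ← map_mul, hwi, map_one]⟩
    haveI : Invertible LiC := LiC.invertibleOfDetInvertible
    set Z := ⅟LiC * RiC with hZdef
    have hRLZ : LiC * Z = RiC := by rw [hZdef, ← mul_assoc, mul_invOf_self, one_mul]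
    have hcomL : ΦC.mapMatrix LiC = BiC * LiC := by
      have e : ΦC.mapMatrix LiC = l.mapMatrix (Yi.map ⇑Φ) := by
        ext p q
        simp only [hLiCdef, RingHom.mapMatrix_apply, Matrix.map_apply]
        exact hΦl _
      rw [e, hYiΦ, map_mul]
    have hcomR : ΦC.mapMatrix RiC = BiC * RiC := by
      have e : ΦC.mapMatrix RiC = rr.mapMatrix (Yi.map ⇑Φ) := by
        ext p q
        simp only [hRiCdef, RingHom.mapMatrix_apply, Matrix.map_apply]
        exact hΦr _
      rw [e, hYiΦ, map_mul, hBiLR]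
    have hone : ΦC.mapMatrix (⅟LiC) * (BiC * LiC) = 1 := by
      rw [← hcomL, ← map_mul, invOf_mul_self, map_one]
    have hZfix : ΦC.mapMatrix Z = Z := by
      calc ΦC.mapMatrix Z = ΦC.mapMatrix (⅟LiC) * (BiC * RiC) := by
            rw [hZdef, map_mul, hcomR]
        _ = ΦC.mapMatrix (⅟LiC) * (BiC * (LiC * Z)) := by rw [hRLZ]
        _ = (ΦC.mapMatrix (⅟LiC) * (BiC * LiC)) * Z := by
            rw [← mul_assoc BiC LiC Z, ← mul_assoc]
        _ = Z := by rw [hone, one_mul]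
    have hZc : ∀ p q, ΦC (Z p q) = Z p q := by
      intro p q
      conv_rhs => rw [← hZfix]
      simp [RingHom.mapMatrix_apply, Matrix.map_apply]
    constructor
    · intro p q
      have h1 : (1:R) ⊗ₜ[K] (Yi p q) = (LiC * Z) p q := by rw [hRLZ]; rfl
      rw [h1, Matrix.mul_apply]
      refine Subring.sum_mem _ fun j _ => ?_
      exact RingHom.mem_range.mpr ⟨Yi p j ⊗ₜ ⟨Z j q, hZc j q⟩, hform _ _⟩
    · have hdetZ : ΦC Z.det = Z.det := by
        rw [RingHom.map_det, hZfix]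
      have hdet1 : (⅟LiC).det * LiC.det = 1 := by
        rw [← Matrix.det_mul, invOf_mul_self, Matrix.det_one]
      set u := l Yi.det * rr (w i) with hudef
      have hZu : Z.det * u = 1 := by
        rw [hZdef, Matrix.det_mul, hRdet, hudef, ← hLdet]
        calc (⅟LiC).det * rr Yi.det * (LiC.det * rr (w i))
            = ((⅟LiC).det * LiC.det) * (rr Yi.det * rr (w i)) := by ring
          _ = 1 := by rw [hdet1, ← map_mul, hwi, map_one, one_mul]
      have huc : ΦC u = u := const_inv ΦC hdetZ hZu
      refine RingHom.mem_range.mpr ⟨w i ⊗ₜ ⟨u, huc⟩, ?_⟩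
      rw [hform]
      show l (w i) * u = (1:R) ⊗ₜ[K] w i
      rw [hudef, ← mul_assoc, ← map_mul, mul_comm (w i) Yi.det, hwi, map_one, one_mul]
      exact hrap _
  -- every 1 ⊗ s is in the range
  have hrightAll : ∀ s : R, (1:R) ⊗ₜ[K] s ∈ RingHom.range μ := by
    let D : Subalgebra K R :=
      { carrier := {s : R | (1:R) ⊗ₜ[K] s ∈ RingHom.range μ}
        mul_mem' := fun {x y} hx hy => by
          have hxy : (1:R) ⊗ₜ[K] (x*y) = ((1:R) ⊗ₜ[K] x) * ((1:R) ⊗ₜ[K] y) := by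
            rw [Algebra.TensorProduct.tmul_mul_tmul, one_mul]
          show (1:R) ⊗ₜ[K] (x*y) ∈ RingHom.range μ
          rw [hxy]
          exact mul_mem hx hy
        add_mem' := fun {x y} hx hy => by
          show (1:R) ⊗ₜ[K] (x+y) ∈ RingHom.range μ
          rw [TensorProduct.tmul_add]
          exact add_mem hx hy
        algebraMap_mem' := fun a => by
          show (1:R) ⊗ₜ[K] (algebraMap K R a) ∈ RingHom.range μ
          rw [← halg' a]
          exact hleft _ }
    intro s
    have hle : Algebra.adjoin K
        ({x : R | ∃ (i : ℕ) (p q : Fin n), (Y.map ⇑(σ' ^ i)) p q = x} ∪ Set.range w) ≤ D := by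
      apply Algebra.adjoin_le
      rintro x (⟨i, p, q, rfl⟩ | ⟨i, rfl⟩)
      · exact (hkey i).1 p q
      · exact (hkey i).2
    rw [hgen] at hle
    exact hle trivial
  -- surjectivity
  have hsurj : Function.Surjective μ := by
    have hall : ∀ z : R ⊗[K] R, z ∈ RingHom.range μ := by
      intro z
      induction z using TensorProduct.induction_on with
      | zero => exact zero_mem _
      | tmul r s =>
        have hrs : r ⊗ₜ[K] s = (r ⊗ₜ[K] (1:R)) * ((1:R) ⊗ₜ[K] s) := by
          rw [Algebra.TensorProduct.tmul_mul_tmul, mul_one, one_mul]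
        rw [hrs]
        exact mul_mem (hleft r) (hrightAll s)
      | add a b ha hb => exact add_mem ha hb
    exact fun z => RingHom.mem_range.mp (hall z)
  -- injectivity
  have hinj : Function.Injective μ := by
    rw [injective_iff_map_eq_zero]
    intro x hx0
    have hbasis : ∃ s : Set ↥(constSubring ΦC),
        Nonempty (Module.Basis ↥s ↥(constSubring φ) ↥(constSubring ΦC)) := by
      letI fld : Field ↥(constSubring φ) :=
        { (inferInstance : CommRing ↥(constSubring φ)) with
          inv := fun a => if h : a = 0 then 0 else Classical.choose (hfld.mul_inv_cancel h)
          exists_pair_ne := hfld.exists_pair_ne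
          mul_inv_cancel := fun a ha => by
            simp only [dif_neg ha]
            exact Classical.choose_spec (hfld.mul_inv_cancel ha)
          inv_zero := by simp
          nnqsmul := _
          qsmul := _ }
      exact ⟨Module.Basis.ofVectorSpaceIndex _ _, ⟨Module.Basis.ofVectorSpace _ _⟩⟩
    obtain ⟨sb, ⟨bas⟩⟩ := hbasis
    let B := bas.baseChange R
    set cc := B.repr x with hccdef
    have hxsum : x = ∑ i ∈ cc.support, cc i • B i := by
      conv_lhs => rw [← B.linearCombination_repr x]
      rw [Finsupp.linearCombination_apply, Finsupp.sum]
    have hμsum : ∑ i ∈ cc.support, (cc i ⊗ₜ[K] (1:R)) * ((bas i : ↥(constSubring ΦC)) : R ⊗[K] R) = 0 := by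
      rw [← hx0]
      conv_rhs => rw [hxsum]
      rw [map_sum]
      refine Finset.sum_congr rfl fun i _ => ?_
      have hBi : cc i • B i = cc i ⊗ₜ[↥(constSubring φ)] bas i := by
        rw [Module.Basis.baseChange_apply, TensorProduct.smul_tmul', smul_eq_mul, mul_one]
      rw [hBi, hform]
    -- linear independence over k transported to C
    have hbLI : ∀ (t : Finset ↥sb)
        (d : _ → K), (∀ i ∈ t, φ (d i) = d i) →
        (∑ i ∈ t, ((algebraMap K R (d i)) ⊗ₜ[K] (1:R)) * ((bas i : ↥(constSubring ΦC)) : R ⊗[K] R)) = 0 →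
        ∀ i ∈ t, d i = 0 := by
      intro t d hfix hsum i hi
      set dk : _ → ↥(constSubring φ) :=
        fun j => if h : j ∈ t then (⟨d j, hfix j h⟩ : ↥(constSubring φ)) else 0 with hdk
      have hsum2 : ∑ j ∈ t, dk j • bas j = 0 := by
        have hco : ((∑ j ∈ t, dk j • bas j : ↥(constSubring ΦC)) : R ⊗[K] R) = 0 := by
          rw [show ((∑ j ∈ t, dk j • bas j : ↥(constSubring ΦC)) : R ⊗[K] R)
              = ∑ j ∈ t, (((dk j • bas j : ↥(constSubring ΦC))) : R ⊗[K] R)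
            from map_sum ((constSubring ΦC).subtype) _ t]
          rw [← hsum]
          refine Finset.sum_congr rfl fun j hj => ?_
          have e0 : ((dk j : ↥(constSubring φ)) : K) = d j := by
            simp only [hdk, dif_pos hj]
          rw [Algebra.smul_def, MulMemClass.coe_mul]
          congr 1
          show ((kToH φ Φ hΦ ΦC hΦC (dk j) : ↥(constSubring ΦC)) : R ⊗[K] R) = _
          show (algebraMap K R ((dk j : ↥(constSubring φ)) : K)) ⊗ₜ[K] (1:R) = _
          rw [e0]
        exact (ZeroMemClass.coe_eq_zero).mp hco
      have hall := linearIndependent_iff'.mp bas.linearIndependent t dk hsum2 i hi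
      have e1 : d i = ((dk i : ↥(constSubring φ)) : K) := by
        simp only [hdk, dif_pos hi]
      rw [e1, hall]
      rfl
    have hz := key_li φ Φ hsimple hconst ΦC hΦC
      (fun i => ((bas i : ↥(constSubring ΦC)) : R ⊗[K] R))
      (fun i => (bas i).2) hbLI cc.support (fun i => cc i) hμsum
    rw [hxsum]
    exact Finset.sum_eq_zero fun i hi => by
      rw [show cc i = (0:R) from hz i hi, zero_smul]
  exact ⟨μ, hform, hinj, hsurj⟩
end
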